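/- arXiv:2107.06620 — 3 statements merged into one kernel-verified Lean document; each statement's English description precedes it below -/
import Mathlib

section
/- The ε-horizontal gradient satisfies: (i) ∇_ε f = ∇_ε(∇f) for every f : T → ℂ, where ∇ = id − Σ; (ii) for every p ∈ [1,∞], ‖∇_ε* f‖_{L^p(μ)} ≤ ‖ε‖_∞ ‖f‖_{L^p(μ)} and ‖∇_ε* f‖_{L^{1,∞}(μ)} ≤ ‖ε‖_∞ ‖f‖_{L^{1,∞}(μ)}; (iii) for every p ∈ [1,∞], ‖∇_ε f‖_{L^p(μ)} ≤ ‖ε‖_∞ ‖f‖_{L^p(μ)} and ‖∇_ε f‖_{L^{1,∞}(μ)} ≤ q ‖ε‖_∞ ‖f‖_{L^{1,∞}(μ)}; (iv) for all f, g ∈ L²(μ) and all m, n ∈ ℕ, ⟨Σⁿ∇_ε* f, Σᵐ∇_ε* g⟩_{L²(μ)} = δ_{nm} ⟨∇_ε* f, ∇_ε* g⟩_{L²(μ)}. -/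
open MeasureTheory ENNReal Set Function
open scoped NNReal ENNReal Classical

noncomputable section

/-- A homogeneous tree of degree `q+1` with a distinguished end (mythical ancestor),
encoded through its graph distance `dist`, horocyclic level function `level`,
and predecessor map `pred`. -/
structure FlowTree (q : ℕ) where
  V : Type
  countableV : Countable V
  dist : V → V → ℕ
  level : V → ℤ
  pred : V → V
  dist_self : ∀ x, dist x x = 0
  eq_of_dist_eq_zero : ∀ x y, dist x y = 0 → x = y
  dist_comm : ∀ x y, dist x y = dist y x
  dist_triangle : ∀ x y z, dist x z ≤ dist x y + dist y z
  level_pred : ∀ x, level (pred x) = level x + 1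
  succ_finite : ∀ x, Set.Finite {y | pred y = x}
  succ_card : ∀ x, Nat.card {y // pred y = x} = q
  dist_le : ∀ (x y : V) (n m : ℕ), pred^[n] x = pred^[m] y → dist x y ≤ n + m
  dist_spec : ∀ x y, ∃ n m : ℕ, pred^[n] x = pred^[m] y ∧ n + m = dist x y

namespace FlowTree

variable {q : ℕ} (S : FlowTree q)

/-- The canonical flow measure weight `μ(x) = q^{ℓ(x)}`, as an extended nonnegative real. -/
def w (x : S.V) : ℝ≥0∞ := (q : ℝ≥0∞) ^ ((S.level x : ℤ) : ℝ)

/-- The canonical flow measure weight `μ(x) = q^{ℓ(x)}`, as a real number. -/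
def wR (x : S.V) : ℝ := (q : ℝ) ^ (S.level x)

/-- The canonical flow measure of a set `E ⊆ T`. -/
def muS (E : Set S.V) : ℝ≥0∞ := ∑' x : E, S.w x

/-- The `L^p(μ)` (quasi)norm, `p ∈ [1,∞]`. -/
def lpNorm (p : ℝ≥0∞) {E : Type*} [NNNorm E] (f : S.V → E) : ℝ≥0∞ :=
  if p = ∞ then ⨆ x, (‖f x‖₊ : ℝ≥0∞)
  else (∑' x, (‖f x‖₊ : ℝ≥0∞) ^ p.toReal * S.w x) ^ (1 / p.toReal)

/-- The weak `L^{1,∞}(μ)` quasinorm `sup_{λ>0} λ · μ({|f| > λ})`. -/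
def wkNorm {E : Type*} [NNNorm E] (f : S.V → E) : ℝ≥0∞ :=
  ⨆ t : ℝ≥0, (t : ℝ≥0∞) * S.muS {x | t < ‖f x‖₊}

/-- `Σf(x) = f(𝔭(x))`. -/
def sig (f : S.V → ℂ) : S.V → ℂ := fun x => f (S.pred x)

/-- `Σ*f(x) = (1/q) Σ_{y ∈ succ(x)} f(y)`. -/
def sigStar (f : S.V → ℂ) : S.V → ℂ :=
  fun x => (q : ℂ)⁻¹ * ∑' y : {y | S.pred y = x}, f y.1

/-- The flow gradient `∇ = id − Σ`. -/
def grad (f : S.V → ℂ) : S.V → ℂ := fun x => f x - f (S.pred x)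

/-- `∇* = id − Σ*`. -/
def gradStar (f : S.V → ℂ) : S.V → ℂ := fun x => f x - S.sigStar f x

/-- The modulus of the gradient `Df(x) = Σ_{y ∼ x} |f(x) − f(y)|`. -/
def Dmod (f : S.V → ℂ) : S.V → ℝ :=
  fun x => ∑' y : {y | S.dist x y = 1}, ‖f x - f y.1‖

/-- `Σ̃_n = Σ^n` for `n ≥ 0` and `(Σ*)^{−n}` for `n < 0`. -/
def sigTilde (n : ℤ) (f : S.V → ℂ) : S.V → ℂ :=
  if 0 ≤ n then (S.sig)^[n.toNat] f else (S.sigStar)^[(-n).toNat] f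

/-- `Σ*` acting on real-valued functions. -/
def sigStarR (f : S.V → ℝ) : S.V → ℝ :=
  fun x => (q : ℝ)⁻¹ * ∑' y : {y | S.pred y = x}, f y.1

/-- The flow Laplacian `𝓛 = id − (Σ + Σ*)/2`, acting pointwise on real functions. -/
def lapR (f : S.V → ℝ) : S.V → ℝ :=
  fun x => f x - (f (S.pred x) + S.sigStarR f x) / 2

/-- `δ_y/μ(y)`, the normalized delta at `y`. -/
def deltaMu (y : S.V) : S.V → ℝ := fun z => if z = y then (S.wR y)⁻¹ else 0

/-- The heat kernel `H_t(x,y)` of the flow Laplacian, i.e. `(e^{−t𝓛} (δ_y/μ(y)))(x)`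
computed via the exponential power series of the bounded operator `𝓛`. -/
def Hker (t : ℝ) (x y : S.V) : ℝ :=
  ∑' n : ℕ, ((-t) ^ n / (n.factorial : ℝ)) * ((S.lapR)^[n] (S.deltaMu y)) x

/-- The integral kernel `K(x,y)` of `𝓛^{−1/2}`, by subordination. -/
def Kker (x y : S.V) : ℝ :=
  (Real.sqrt Real.pi)⁻¹ * ∫ t in Set.Ioi (0 : ℝ), S.Hker t x y * t ^ (-(1 : ℝ)/2)

/-- The Riesz transform `𝓡 = ∇𝓛^{−1/2}`, defined on finitely supported functions. -/
def riesz (f : S.V → ℂ) : S.V → ℂ :=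
  fun x => ∑' y, ((S.Kker x y - S.Kker (S.pred x) y : ℝ) : ℂ) * f y * (S.wR y : ℂ)

/-- The integral operator with almost-radial kernel `q^{−ℓ(x)/2} G(d(x,y)) q^{−ℓ(y)/2}`. -/
def kernelOp (G : ℕ → ℂ) (f : S.V → ℂ) : S.V → ℂ :=
  fun x => ∑' y, (((q : ℝ) ^ (-((S.level x : ℤ) : ℝ)/2) * (q : ℝ) ^ (-((S.level y : ℤ) : ℝ)/2) : ℝ) : ℂ)
    * G (S.dist x y) * f y * (S.wR y : ℂ)

/-- The ε-horizontal gradient `∇_ε f(x) = (1/q) Σ_{y ∈ succ(x)} ε(y) f(y)`. -/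
def hgrad (ε f : S.V → ℂ) : S.V → ℂ :=
  fun x => (q : ℂ)⁻¹ * ∑' y : {y | S.pred y = x}, ε y.1 * f y.1

/-- The adjoint ε-horizontal gradient `∇_ε* f(x) = conj(ε(x)) f(𝔭(x))`. -/
def hgradStar (ε f : S.V → ℂ) : S.V → ℂ :=
  fun x => (starRingEnd ℂ) (ε x) * f (S.pred x)

/-- `‖ε‖_∞`. -/
def epsSup (ε : S.V → ℂ) : ℝ≥0∞ := ⨆ x, (‖ε x‖₊ : ℝ≥0∞)

/-- The `L²(μ)` inner product. -/
def inner2 (f g : S.V → ℂ) : ℂ := ∑' x, f x * (starRingEnd ℂ) (g x) * (S.wR x : ℂ)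

/-- `y ≤ x` iff `d(x,y) = ℓ(x) − ℓ(y)`. -/
def le' (y x : S.V) : Prop := (S.dist x y : ℤ) = S.level x - S.level y

/-- Admissible trapezoids of `(T,μ)`. -/
def IsAdmissibleTrapezoid (F : Set S.V) : Prop :=
  (∃ x, F = {x}) ∨
  ∃ (x₀ : S.V) (h1 h2 : ℕ), 0 < h1 ∧ 2 * h1 ≤ h2 ∧ h2 ≤ 12 * h1 ∧
    F = {x | S.le' x x₀ ∧ S.level x₀ - (h2 : ℤ) < S.level x ∧ S.level x ≤ S.level x₀ - (h1 : ℤ)}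

/-- `(1,∞)`-atoms of `(T,μ)`. -/
def IsOneInftyAtom (a : S.V → ℂ) : Prop :=
  ∃ F : Set S.V, S.IsAdmissibleTrapezoid F ∧ Function.support a ⊆ F ∧
    (∑' x, a x * (S.wR x : ℂ)) = 0 ∧ ∀ x, (‖a x‖₊ : ℝ≥0∞) ≤ (S.muS F)⁻¹

end FlowTree

namespace ZRiesz

/-- The discrete Laplacian on `ℤ`. -/
def deltaZ (F : ℤ → ℝ) : ℤ → ℝ := fun n => F n - (F (n + 1) + F (n - 1)) / 2

/-- The heat kernel `h_t^ℤ = e^{−tΔ_ℤ} δ_0` on `ℤ`, via the exponential power series. -/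
def heatZ (t : ℝ) (n : ℤ) : ℝ :=
  ∑' k : ℕ, ((-t) ^ k / (k.factorial : ℝ)) *
    (deltaZ^[k] (fun m => if m = 0 then (1 : ℝ) else 0)) n

/-- Kernel of the Riesz transform on `ℤ`: `k_ℤ(n) = π^{−1/2} ∫₀^∞ (∇_ℤ h_t^ℤ)(n) t^{−1/2} dt`. -/
def kZ (n : ℤ) : ℝ :=
  (Real.sqrt Real.pi)⁻¹ * ∫ t in Set.Ioi (0 : ℝ), (heatZ t n - heatZ t (n + 1)) * t ^ (-(1 : ℝ)/2)

/-- Kernel of the skew-symmetric part: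
`k̃_ℤ(n) = π^{−1/2} ∫₀^∞ (∇̃_ℤ h_t^ℤ)(n) t^{−1/2} dt`. -/
def ktZ (n : ℤ) : ℝ :=
  (Real.sqrt Real.pi)⁻¹ *
    ∫ t in Set.Ioi (0 : ℝ), (heatZ t (n - 1) - heatZ t (n + 1)) * t ^ (-(1 : ℝ)/2)

/-- The closed formula `k̃_ℤ(m) = (2√2/π) m/(m² − 1/4)`. -/
def ktZc (m : ℤ) : ℝ := (2 * Real.sqrt 2 / Real.pi) * (m : ℝ) / ((m : ℝ) ^ 2 - 1/4)

/-- `G(n) = Σ_{k≥0} q^{−(n+2k)/2} k̃_ℤ(n+2k+1)` (subordination kernel version). -/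
def Gint (q : ℕ) (n : ℕ) : ℝ :=
  ∑' k : ℕ, (q : ℝ) ^ (-(((n : ℝ)) + 2 * (k : ℝ))/2) * ktZ ((n : ℤ) + 2 * (k : ℤ) + 1)

/-- `G(n) = Σ_{k≥0} q^{−(n+2k)/2} k̃_ℤ(n+2k+1)` (closed formula version). -/
def Gc (q : ℕ) (n : ℕ) : ℝ :=
  ∑' k : ℕ, (q : ℝ) ^ (-(((n : ℝ)) + 2 * (k : ℝ))/2) * ktZc ((n : ℤ) + 2 * (k : ℤ) + 1)

/-- The `ℓ^p(ℤ)` norm. -/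
def zlpNorm (p : ℝ≥0∞) (F : ℤ → ℂ) : ℝ≥0∞ :=
  if p = ∞ then ⨆ n, (‖F n‖₊ : ℝ≥0∞)
  else (∑' n : ℤ, (‖F n‖₊ : ℝ≥0∞) ^ p.toReal) ^ (1 / p.toReal)

/-- The `ℓ^{1,∞}(ℕ)` quasinorm. -/
def natWk (F : ℕ → ℂ) : ℝ≥0∞ :=
  ⨆ t : ℝ≥0, (t : ℝ≥0∞) * ∑' (_ : {n : ℕ | t < ‖F n‖₊}), (1 : ℝ≥0∞)

end ZRiesz

/-- The punctured boundary `Ω = ∂T \ {ω_*}` of the tree, together with the measure `ν`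
with `ν(Ω_x) = q^{ℓ(x)}`.  `vert ω n` is the vertex `ω_n` of level `n` on the geodesic
`[ω, ω_*]`. -/
structure FlowTreeBoundary {q : ℕ} (S : FlowTree q) where
  Ω : Type
  mΩ : MeasurableSpace Ω
  ν : @MeasureTheory.Measure Ω mΩ
  vert : Ω → ℤ → S.V
  level_vert : ∀ ω n, S.level (vert ω n) = n
  pred_vert : ∀ ω n, S.pred (vert ω n) = vert ω (n + 1)
  vert_surj : ∀ x : S.V, ∃ ω, vert ω (S.level x) = x
  vert_inj : ∀ ω ω', (∀ n, vert ω n = vert ω' n) → ω = ω'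
  meas_cone : ∀ x : S.V, @MeasurableSet Ω mΩ {ω | vert ω (S.level x) = x}
  nu_cone : ∀ x : S.V, ν {ω | vert ω (S.level x) = x} = (q : ℝ≥0∞) ^ ((S.level x : ℤ) : ℝ)

attribute [instance] FlowTreeBoundary.mΩ

namespace FlowTreeBoundary

variable {q : ℕ} {S : FlowTree q} (B : FlowTreeBoundary S)

/-- The product measure `ν × #` on `Ω × ℤ`. -/
def pm : MeasureTheory.Measure (B.Ω × ℤ) := B.ν.prod MeasureTheory.Measure.count

/-- `Ω_x = {ω : x ∈ [ω, ω_*]}`. -/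
def cone (x : S.V) : Set B.Ω := {ω | B.vert ω (S.level x) = x}

/-- The lifting operator `Φf(ω,n) = f(ω_n)`. -/
def lift (f : S.V → ℂ) : B.Ω × ℤ → ℂ := fun p => f (B.vert p.1 p.2)

/-- The lifting operator on `ℝ≥0∞`-valued functions. -/
def liftNN (f : S.V → ℝ≥0∞) : B.Ω × ℤ → ℝ≥0∞ := fun p => f (B.vert p.1 p.2)

/-- The adjoint `Φ*g(x) = ν(Ω_x)^{−1} ∫_{Ω_x} g(ω, ℓ(x)) dν(ω)`. -/
def liftStar (g : B.Ω × ℤ → ℂ) : S.V → ℂ :=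
  fun x => ((B.ν (B.cone x)).toReal)⁻¹ * ∫ ω in B.cone x, g (ω, S.level x) ∂B.ν

/-- The adjoint `Φ*` on `ℝ≥0∞`-valued functions. -/
def liftStarNN (g : B.Ω × ℤ → ℝ≥0∞) : S.V → ℝ≥0∞ :=
  fun x => (B.ν (B.cone x))⁻¹ * ∫⁻ ω in B.cone x, g (ω, S.level x) ∂B.ν

end FlowTreeBoundary

/-- The weak `L^{1,∞}(μ)` quasinorm with respect to a measure. -/
def wkMeas {α : Type*} [MeasurableSpace α] (μ : MeasureTheory.Measure α) (g : α → ℂ) : ℝ≥0∞ :=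
  ⨆ t : ℝ≥0, (t : ℝ≥0∞) * μ {a | t < ‖g a‖₊}

/-- The weak `L^{1,∞}(μ)` quasinorm for `ℝ≥0∞`-valued functions. -/
def wkMeasNN {α : Type*} [MeasurableSpace α] (μ : MeasureTheory.Measure α) (g : α → ℝ≥0∞) :
    ℝ≥0∞ :=
  ⨆ t : ℝ≥0, (t : ℝ≥0∞) * μ {a | (t : ℝ≥0∞) < g a}

end

noncomputable section Helpers
namespace FlowTree
variable {q : ℕ} (S : FlowTree q)

lemma fiber_finite (x : S.V) : Finite {y // S.pred y = x} := (S.succ_finite x).to_subtype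

lemma fiber_card (x : S.V) : Nat.card {y // S.pred y = x} = q := S.succ_card x

lemma level_fiber {x y : S.V} (h : S.pred y = x) : S.level y = S.level x - 1 := by
  have := S.level_pred y; rw [h] at this; omega

instance (x : S.V) : Finite {y | S.pred y = x} := (S.succ_finite x).to_subtype

noncomputable instance (x : S.V) : Fintype {y | S.pred y = x} := Fintype.ofFinite _

lemma w_pred (hq : q ≠ 0) (x : S.V) : S.w (S.pred x) = q * S.w x := by
  unfold w
  rw [S.level_pred x]
  push_cast
  rw [ENNReal.rpow_add _ _ (by exact_mod_cast hq) (by simp), ENNReal.rpow_one, mul_comm]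

lemma w_fiber (hq : q ≠ 0) {x y : S.V} (h : S.pred y = x) :
    S.w y = (q : ℝ≥0∞)⁻¹ * S.w x := by
  have hy := S.level_fiber h
  unfold w
  rw [hy]
  push_cast
  rw [sub_eq_add_neg, ENNReal.rpow_add _ _ (by exact_mod_cast hq) (by simp),
    ENNReal.rpow_neg, ENNReal.rpow_one, mul_comm]

lemma wR_pos (hq : q ≠ 0) (x : S.V) : 0 < S.wR x := by
  unfold wR
  positivity

lemma wR_fiber (hq : q ≠ 0) {x y : S.V} (h : S.pred y = x) :
    S.wR y = (q : ℝ)⁻¹ * S.wR x := by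
  have hy := S.level_fiber h
  have hq' : (q : ℝ) ≠ 0 := by exact_mod_cast hq
  unfold wR
  rw [hy, zpow_sub₀ hq', zpow_one]
  ring

lemma w_fiber_sum (hq : q ≠ 0) (x : S.V) :
    ∑' y : {y // S.pred y = x}, S.w y.1 = S.w x := by
  haveI := S.fiber_finite x
  haveI : Fintype {y // S.pred y = x} := Fintype.ofFinite _
  rw [tsum_fintype]
  have hval : ∀ y : {y // S.pred y = x}, S.w y.1 = (q : ℝ≥0∞)⁻¹ * S.w x :=
    fun y => S.w_fiber hq y.2
  rw [Finset.sum_congr rfl (fun y _ => hval y), Finset.sum_const]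
  have hcard : Fintype.card {y // S.pred y = x} = q := by
    rw [← Nat.card_eq_fintype_card, S.fiber_card]
  rw [Finset.card_univ, hcard, nsmul_eq_mul, ← mul_assoc,
    ENNReal.mul_inv_cancel (by exact_mod_cast hq) (by simp), one_mul]

/-- Decomposition of `V` into fibers of `pred`. -/
def fiberEquiv : S.V ≃ Σ u : S.V, {y // S.pred y = u} where
  toFun x := ⟨S.pred x, x, rfl⟩
  invFun p := p.2.1
  left_inv x := rfl
  right_inv p := by rcases p with ⟨u, y, h⟩; subst h; rfl

lemma tsum_pred_mul_w (hq : q ≠ 0) (g : S.V → ℝ≥0∞) :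
    ∑' x, g (S.pred x) * S.w x = ∑' u, g u * S.w u := by
  calc ∑' x, g (S.pred x) * S.w x
      = ∑' p : Σ u : S.V, {y // S.pred y = u}, g (S.pred p.2.1) * S.w p.2.1 := by
        rw [← S.fiberEquiv.symm.tsum_eq (fun x => g (S.pred x) * S.w x)]
        exact tsum_congr fun p => rfl
    _ = ∑' u, ∑' y : {y // S.pred y = u}, g (S.pred y.1) * S.w y.1 := ENNReal.tsum_sigma' _
    _ = ∑' u, ∑' y : {y // S.pred y = u}, g u * S.w y.1 := by
        congr 1; ext u; congr 1; ext y; rw [y.2]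
    _ = ∑' u, g u * S.w u := by
        congr 1; ext u; rw [ENNReal.tsum_mul_left, S.w_fiber_sum hq]

lemma muS_eq_indicator (E : Set S.V) : S.muS E = ∑' x, E.indicator S.w x :=
  tsum_subtype E S.w

lemma muS_mono {E F : Set S.V} (h : E ⊆ F) : S.muS E ≤ S.muS F := by
  rw [muS_eq_indicator, muS_eq_indicator]
  exact Summable.tsum_le_tsum (fun x => Set.indicator_le_indicator_of_subset h (fun _ => zero_le) x)
    ENNReal.summable ENNReal.summable

lemma muS_preimage (hq : q ≠ 0) (A : Set S.V) : S.muS (S.pred ⁻¹' A) = S.muS A := by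
  rw [muS_eq_indicator, muS_eq_indicator]
  have : ∀ x, (S.pred ⁻¹' A).indicator S.w x
      = A.indicator (fun _ => (1 : ℝ≥0∞)) (S.pred x) * S.w x := by
    intro x
    by_cases h : S.pred x ∈ A <;>
      simp [Set.indicator_apply, h, Set.mem_preimage]
  rw [tsum_congr this, S.tsum_pred_mul_w hq]
  congr 1; ext u
  by_cases h : u ∈ A <;> simp [Set.indicator_apply, h]

lemma muS_image_le (hq : q ≠ 0) (A : Set S.V) :
    S.muS (S.pred '' A) ≤ (q : ℝ≥0∞) * S.muS A := by
  have hs : Function.Surjective (fun y : A => (⟨S.pred y.1, y.1, y.2, rfl⟩ : S.pred '' A)) := by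
    rintro ⟨x, y, hy, rfl⟩
    exact ⟨⟨y, hy⟩, rfl⟩
  calc S.muS (S.pred '' A) = ∑' x : S.pred '' A, S.w x.1 := rfl
    _ ≤ ∑' y : A, S.w (S.pred y.1) :=
        ENNReal.tsum_le_tsum_comp_of_surjective hs (fun x : S.pred '' A => S.w x.1)
    _ = ∑' y : A, (q : ℝ≥0∞) * S.w y.1 := by
        congr 1; ext y; rw [S.w_pred hq]
    _ = (q : ℝ≥0∞) * S.muS A := ENNReal.tsum_mul_left

section Eps
variable (eps f : S.V → ℂ)

lemma hgrad_grad (hz : ∀ x : S.V, ∑' y : {y | S.pred y = x}, eps y.1 = 0) :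
    S.hgrad eps f = S.hgrad eps (S.grad f) := by
  funext x
  unfold hgrad grad
  congr 1
  have h1 : ∀ y : {y | S.pred y = x},
      eps y.1 * (f y.1 - f (S.pred y.1)) = eps y.1 * f y.1 - eps y.1 * f x := by
    intro y
    have : S.pred y.1 = x := y.2
    rw [this]; ring
  rw [tsum_congr h1, Summable.tsum_sub (Summable.of_finite) (Summable.of_finite),
    tsum_mul_right, hz x, zero_mul, sub_zero]

lemma hgradStar_nnnorm (x : S.V) :
    ‖S.hgradStar eps f x‖₊ = ‖eps x‖₊ * ‖f (S.pred x)‖₊ := by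
  unfold hgradStar
  rw [nnnorm_mul, RCLike.nnnorm_conj]

lemma coe_nnnorm_le_epsSup (x : S.V) : (‖eps x‖₊ : ℝ≥0∞) ≤ S.epsSup eps :=
  le_iSup (fun x => (‖eps x‖₊ : ℝ≥0∞)) x

lemma hgrad_nnnorm_le (hq : q ≠ 0) (x : S.V) :
    (‖S.hgrad eps f x‖₊ : ℝ≥0∞)
      ≤ (q : ℝ≥0∞)⁻¹ * ∑' y : {y | S.pred y = x}, ((‖eps y.1‖₊ : ℝ≥0∞) * ‖f y.1‖₊) := by
  unfold hgrad
  rw [nnnorm_mul, tsum_fintype, tsum_fintype, ENNReal.coe_mul]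
  have hc : (‖((q : ℂ))⁻¹‖₊ : ℝ≥0∞) = (q : ℝ≥0∞)⁻¹ := by
    rw [nnnorm_inv]
    simp [ENNReal.coe_inv (by exact_mod_cast hq : (q : ℝ≥0) ≠ 0)]
  rw [hc]
  refine mul_le_mul_right ?_ _
  calc (‖∑ y : {y | S.pred y = x}, eps y.1 * f y.1‖₊ : ℝ≥0∞)
      ≤ ∑ y : {y | S.pred y = x}, (‖eps y.1 * f y.1‖₊ : ℝ≥0∞) := by
        rw [← ENNReal.coe_finset_sum]
        exact_mod_cast nnnorm_sum_le _ _
    _ = ∑ y : {y | S.pred y = x}, ((‖eps y.1‖₊ : ℝ≥0∞) * ‖f y.1‖₊) := by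
        refine Finset.sum_congr rfl fun y _ => ?_
        rw [nnnorm_mul, ENNReal.coe_mul]

lemma lp_hgradStar (hq : q ≠ 0) (p : ℝ≥0∞) (hp : 1 ≤ p) :
    S.lpNorm p (S.hgradStar eps f) ≤ S.epsSup eps * S.lpNorm p f := by
  unfold lpNorm
  by_cases hpt : p = ∞
  · rw [if_pos hpt, if_pos hpt]
    rw [ENNReal.mul_iSup]
    refine iSup_le fun x => ?_
    rw [S.hgradStar_nnnorm eps f x, ENNReal.coe_mul]
    exact le_iSup_of_le (S.pred x)
      (mul_le_mul' (S.coe_nnnorm_le_epsSup eps x) le_rfl)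
  · rw [if_neg hpt, if_neg hpt]
    have hr : 1 ≤ p.toReal := by
      have := ENNReal.toReal_mono hpt hp
      simpa using this
    set r := p.toReal with hrdef
    have hr0 : 0 < r := lt_of_lt_of_le one_pos hr
    set E := S.epsSup eps with hE
    have key : ∑' x, (‖S.hgradStar eps f x‖₊ : ℝ≥0∞) ^ r * S.w x
        ≤ E ^ r * ∑' u, (‖f u‖₊ : ℝ≥0∞) ^ r * S.w u := by
      have step : ∀ x, (‖S.hgradStar eps f x‖₊ : ℝ≥0∞) ^ r * S.w x
          ≤ (E ^ r * (‖f (S.pred x)‖₊ : ℝ≥0∞) ^ r) * S.w x := by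
        intro x
        refine mul_le_mul_left ?_ _
        rw [S.hgradStar_nnnorm eps f x, ENNReal.coe_mul,
          ENNReal.mul_rpow_of_nonneg _ _ hr0.le]
        exact mul_le_mul_left (ENNReal.rpow_le_rpow (S.coe_nnnorm_le_epsSup eps x) hr0.le) _
      calc ∑' x, (‖S.hgradStar eps f x‖₊ : ℝ≥0∞) ^ r * S.w x
          ≤ ∑' x, (E ^ r * (‖f (S.pred x)‖₊ : ℝ≥0∞) ^ r) * S.w x :=
            Summable.tsum_le_tsum step ENNReal.summable ENNReal.summable
        _ = ∑' u, (E ^ r * (‖f u‖₊ : ℝ≥0∞) ^ r) * S.w u :=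
            S.tsum_pred_mul_w hq (fun u => E ^ r * (‖f u‖₊ : ℝ≥0∞) ^ r)
        _ = E ^ r * ∑' u, (‖f u‖₊ : ℝ≥0∞) ^ r * S.w u := by
            rw [← ENNReal.tsum_mul_left]
            exact tsum_congr fun u => by ring
    calc (∑' x, (‖S.hgradStar eps f x‖₊ : ℝ≥0∞) ^ r * S.w x) ^ (1 / r)
        ≤ (E ^ r * ∑' u, (‖f u‖₊ : ℝ≥0∞) ^ r * S.w u) ^ (1 / r) :=
          ENNReal.rpow_le_rpow key (by positivity)
      _ = E * (∑' u, (‖f u‖₊ : ℝ≥0∞) ^ r * S.w u) ^ (1 / r) := by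
          rw [ENNReal.mul_rpow_of_nonneg _ _ (by positivity), ← ENNReal.rpow_mul,
            mul_one_div_cancel hr0.ne', ENNReal.rpow_one]

lemma epsSup_zero_eq (h0 : S.epsSup eps = 0) : ∀ x, eps x = 0 := by
  intro x
  have := (S.coe_nnnorm_le_epsSup eps x).trans h0.le
  simpa using this

lemma wkNorm_of_zero (g : S.V → ℂ) (hg : ∀ x, g x = 0) : S.wkNorm g = 0 := by
  unfold wkNorm
  refine le_antisymm (iSup_le fun t => ?_) (zero_le)
  have : {x | t < ‖g x‖₊} = ∅ := by
    ext x; simp [hg x]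
  rw [this]
  have : S.muS ∅ = 0 := by
    unfold muS; exact tsum_empty
  rw [this, mul_zero]

lemma epsSup_ne_top (hb : ∃ M : ℝ, ∀ x, ‖eps x‖ ≤ M) : S.epsSup eps ≠ ∞ := by
  obtain ⟨M, hM⟩ := hb
  refine ne_top_of_le_ne_top (by simp : ((M.toNNReal : ℝ≥0∞)) ≠ ∞) (iSup_le fun x => ?_)
  rw [ENNReal.coe_le_coe]
  have : ‖eps x‖ ≤ (M.toNNReal : ℝ) := (hM x).trans (Real.le_coe_toNNReal M)
  exact this

lemma wk_hgradStar (hq : q ≠ 0) (hb : ∃ M : ℝ, ∀ x, ‖eps x‖ ≤ M) :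
    S.wkNorm (S.hgradStar eps f) ≤ S.epsSup eps * S.wkNorm f := by
  by_cases h0 : S.epsSup eps = 0
  · rw [S.wkNorm_of_zero _ (fun x => by
      rw [show S.hgradStar eps f x = (starRingEnd ℂ) (eps x) * f (S.pred x) from rfl,
        S.epsSup_zero_eq eps h0 x]; simp)]
    exact zero_le
  · set c := (S.epsSup eps).toNNReal with hcdef
    have hc : (c : ℝ≥0∞) = S.epsSup eps := ENNReal.coe_toNNReal (S.epsSup_ne_top eps hb)
    have hc0 : c ≠ 0 := by
      intro h; rw [h] at hc; exact h0 hc.symm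
    have heps : ∀ x, ‖eps x‖₊ ≤ c := by
      intro x
      rw [← ENNReal.coe_le_coe, hc]
      exact S.coe_nnnorm_le_epsSup eps x
    refine iSup_le fun t => ?_
    have hsub : {x | t < ‖S.hgradStar eps f x‖₊} ⊆ S.pred ⁻¹' {u | t / c < ‖f u‖₊} := by
      intro x hx
      simp only [Set.mem_setOf_eq] at hx
      rw [S.hgradStar_nnnorm eps f x] at hx
      have : t < c * ‖f (S.pred x)‖₊ :=
        hx.trans_le (mul_le_mul' (heps x) le_rfl)
      simp only [Set.mem_preimage, Set.mem_setOf_eq]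
      rw [div_lt_iff₀ (pos_iff_ne_zero.mpr hc0)]
      rwa [mul_comm] at this
    calc (t : ℝ≥0∞) * S.muS {x | t < ‖S.hgradStar eps f x‖₊}
        ≤ (t : ℝ≥0∞) * S.muS (S.pred ⁻¹' {u | t / c < ‖f u‖₊}) :=
          mul_le_mul_right (S.muS_mono hsub) _
      _ = (t : ℝ≥0∞) * S.muS {u | t / c < ‖f u‖₊} := by rw [S.muS_preimage hq]
      _ = (c : ℝ≥0∞) * (((t / c : ℝ≥0) : ℝ≥0∞) * S.muS {u | t / c < ‖f u‖₊}) := by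
          rw [← mul_assoc, ← ENNReal.coe_mul, mul_div_cancel₀ _ hc0]
      _ ≤ S.epsSup eps * S.wkNorm f := by
          rw [hc]
          exact mul_le_mul' le_rfl (le_iSup (fun s : ℝ≥0 =>
            (s : ℝ≥0∞) * S.muS {u | s < ‖f u‖₊}) (t / c))

lemma tsum_fiber_setOf (x : S.V) (B : S.V → ℝ≥0∞) :
    ∑' y : {y | S.pred y = x}, B y.1 = ∑' y : {y // S.pred y = x}, B y.1 := rfl

lemma fiber_sum_one (hq : q ≠ 0) (x : S.V) :
    ∑ _y : {y | S.pred y = x}, (q : ℝ≥0∞)⁻¹ = 1 := by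
  rw [Finset.sum_const, Finset.card_univ]
  have hcard : Fintype.card {y | S.pred y = x} = q := by
    rw [← Nat.card_eq_fintype_card]
    exact S.succ_card x
  rw [hcard, nsmul_eq_mul]
  exact ENNReal.mul_inv_cancel (by exact_mod_cast hq) (by simp)

lemma tsum_fiber_le_const (hq : q ≠ 0) (x : S.V) (a : S.V → ℝ≥0∞) (c : ℝ≥0∞)
    (h : ∀ y : {y | S.pred y = x}, a y.1 ≤ c) :
    ∑' y : {y | S.pred y = x}, a y.1 ≤ (q : ℝ≥0∞) * c := by
  rw [tsum_fintype]
  calc ∑ y : {y | S.pred y = x}, a y.1 ≤ ∑ _y : {y | S.pred y = x}, c :=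
        Finset.sum_le_sum fun y _ => h y
    _ = (q : ℝ≥0∞) * c := by
        rw [Finset.sum_const, Finset.card_univ]
        have hcard : Fintype.card {y | S.pred y = x} = q := by
          rw [← Nat.card_eq_fintype_card]; exact S.succ_card x
        rw [hcard, nsmul_eq_mul]

lemma jensen_fiber (hq : q ≠ 0) (x : S.V) {r : ℝ} (hr : 1 ≤ r) (a : S.V → ℝ≥0∞) :
    ((q : ℝ≥0∞)⁻¹ * ∑' y : {y | S.pred y = x}, a y.1) ^ r
      ≤ (q : ℝ≥0∞)⁻¹ * ∑' y : {y | S.pred y = x}, (a y.1) ^ r := by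
  rw [tsum_fintype, tsum_fintype, Finset.mul_sum, Finset.mul_sum]
  have := ENNReal.rpow_arith_mean_le_arith_mean_rpow (Finset.univ)
    (fun _ : {y | S.pred y = x} => (q : ℝ≥0∞)⁻¹) (fun y => a y.1)
    (S.fiber_sum_one hq x) hr
  exact this

lemma tsum_tsum_fiber (B : S.V → ℝ≥0∞) :
    ∑' x, ∑' y : {y | S.pred y = x}, B y.1 = ∑' v, B v := by
  calc ∑' x, ∑' y : {y | S.pred y = x}, B y.1
      = ∑' x, ∑' y : {y // S.pred y = x}, B y.1 :=
        tsum_congr fun x => S.tsum_fiber_setOf x B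
    _ = ∑' p : Σ u : S.V, {y // S.pred y = u}, B p.2.1 :=
        (ENNReal.tsum_sigma' (fun p : Σ u : S.V, {y // S.pred y = u} => B p.2.1)).symm
    _ = ∑' v, B v := by
        rw [← S.fiberEquiv.tsum_eq (fun p : Σ u : S.V, {y // S.pred y = u} => B p.2.1)]
        exact tsum_congr fun v => rfl

lemma lp_hgrad (eps f : S.V → ℂ) (hq : q ≠ 0) (p : ℝ≥0∞) (hp : 1 ≤ p) :
    S.lpNorm p (S.hgrad eps f) ≤ S.epsSup eps * S.lpNorm p f := by
  set E := S.epsSup eps with hE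
  unfold lpNorm
  by_cases hpt : p = ∞
  · rw [if_pos hpt, if_pos hpt]
    refine iSup_le fun x => ?_
    calc (‖S.hgrad eps f x‖₊ : ℝ≥0∞)
        ≤ (q : ℝ≥0∞)⁻¹ * ∑' y : {y | S.pred y = x}, ((‖eps y.1‖₊ : ℝ≥0∞) * ‖f y.1‖₊) :=
          S.hgrad_nnnorm_le eps f hq x
      _ ≤ (q : ℝ≥0∞)⁻¹ * ((q : ℝ≥0∞) * (E * ⨆ u, (‖f u‖₊ : ℝ≥0∞))) := by
          refine mul_le_mul_right (S.tsum_fiber_le_const hq x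
            (fun v => (‖eps v‖₊ : ℝ≥0∞) * ‖f v‖₊) _ fun y => ?_) _
          exact mul_le_mul' (S.coe_nnnorm_le_epsSup eps y.1)
            (le_iSup (fun u => (‖f u‖₊ : ℝ≥0∞)) y.1)
      _ = E * ⨆ u, (‖f u‖₊ : ℝ≥0∞) := by
          rw [← mul_assoc, ENNReal.inv_mul_cancel (by exact_mod_cast hq) (by simp), one_mul]
  · rw [if_neg hpt, if_neg hpt]
    have hr : 1 ≤ p.toReal := by
      have := ENNReal.toReal_mono hpt hp
      simpa using this
    set r := p.toReal with hrdef
    have hr0 : 0 < r := lt_of_lt_of_le one_pos hr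
    have step : ∀ x, (‖S.hgrad eps f x‖₊ : ℝ≥0∞) ^ r * S.w x
        ≤ (E ^ r * ((q : ℝ≥0∞)⁻¹ * ∑' y : {y | S.pred y = x}, (‖f y.1‖₊ : ℝ≥0∞) ^ r)) * S.w x := by
      intro x
      refine mul_le_mul_left ?_ _
      have h1 : (‖S.hgrad eps f x‖₊ : ℝ≥0∞)
          ≤ E * ((q : ℝ≥0∞)⁻¹ * ∑' y : {y | S.pred y = x}, (‖f y.1‖₊ : ℝ≥0∞)) := by
        refine (S.hgrad_nnnorm_le eps f hq x).trans ?_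
        have hrw : E * ((q : ℝ≥0∞)⁻¹ * ∑' y : {y | S.pred y = x}, (‖f y.1‖₊ : ℝ≥0∞))
            = (q : ℝ≥0∞)⁻¹ * ∑' y : {y | S.pred y = x}, (E * (‖f y.1‖₊ : ℝ≥0∞)) := by
          rw [ENNReal.tsum_mul_left]; ring
        rw [hrw]
        refine mul_le_mul_right (Summable.tsum_le_tsum (fun y => ?_) ENNReal.summable ENNReal.summable) _
        exact mul_le_mul' (S.coe_nnnorm_le_epsSup eps y.1) le_rfl
      calc (‖S.hgrad eps f x‖₊ : ℝ≥0∞) ^ r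
          ≤ (E * ((q : ℝ≥0∞)⁻¹ * ∑' y : {y | S.pred y = x}, (‖f y.1‖₊ : ℝ≥0∞))) ^ r :=
            ENNReal.rpow_le_rpow h1 hr0.le
        _ = E ^ r * ((q : ℝ≥0∞)⁻¹ * ∑' y : {y | S.pred y = x}, (‖f y.1‖₊ : ℝ≥0∞)) ^ r := by
            rw [ENNReal.mul_rpow_of_nonneg _ _ hr0.le]
        _ ≤ E ^ r * ((q : ℝ≥0∞)⁻¹ * ∑' y : {y | S.pred y = x}, (‖f y.1‖₊ : ℝ≥0∞) ^ r) :=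
            mul_le_mul_right (S.jensen_fiber hq x hr (fun v => (‖f v‖₊ : ℝ≥0∞))) _
    have key : ∑' x, (‖S.hgrad eps f x‖₊ : ℝ≥0∞) ^ r * S.w x
        ≤ E ^ r * ∑' u, (‖f u‖₊ : ℝ≥0∞) ^ r * S.w u := by
      calc ∑' x, (‖S.hgrad eps f x‖₊ : ℝ≥0∞) ^ r * S.w x
          ≤ ∑' x, (E ^ r * ((q : ℝ≥0∞)⁻¹ * ∑' y : {y | S.pred y = x}, (‖f y.1‖₊ : ℝ≥0∞) ^ r)) * S.w x :=
            Summable.tsum_le_tsum step ENNReal.summable ENNReal.summable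
        _ = ∑' x, (E ^ r * (q : ℝ≥0∞)⁻¹)
              * ∑' y : {y | S.pred y = x}, ((‖f y.1‖₊ : ℝ≥0∞) ^ r * S.w (S.pred y.1)) := by
            refine tsum_congr fun x => ?_
            have h1 : ∑' y : {y | S.pred y = x}, ((‖f y.1‖₊ : ℝ≥0∞) ^ r * S.w (S.pred y.1))
                = ∑' y : {y | S.pred y = x}, ((‖f y.1‖₊ : ℝ≥0∞) ^ r * S.w x) :=
              tsum_congr fun y => by
                have : S.pred y.1 = x := y.2
                rw [this]
            rw [h1, ENNReal.tsum_mul_right]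
            ring
        _ = (E ^ r * (q : ℝ≥0∞)⁻¹)
              * ∑' x, ∑' y : {y | S.pred y = x}, ((‖f y.1‖₊ : ℝ≥0∞) ^ r * S.w (S.pred y.1)) :=
            ENNReal.tsum_mul_left
        _ = (E ^ r * (q : ℝ≥0∞)⁻¹) * ∑' v, (‖f v‖₊ : ℝ≥0∞) ^ r * S.w (S.pred v) := by
            rw [S.tsum_tsum_fiber (fun v => (‖f v‖₊ : ℝ≥0∞) ^ r * S.w (S.pred v))]
        _ = (E ^ r * (q : ℝ≥0∞)⁻¹) * ∑' v, (q : ℝ≥0∞) * ((‖f v‖₊ : ℝ≥0∞) ^ r * S.w v) := by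
            congr 1
            refine tsum_congr fun v => ?_
            rw [S.w_pred hq]
            ring
        _ = (E ^ r * (q : ℝ≥0∞)⁻¹) * ((q : ℝ≥0∞) * ∑' v, (‖f v‖₊ : ℝ≥0∞) ^ r * S.w v) := by
            rw [ENNReal.tsum_mul_left]
        _ = E ^ r * ∑' u, (‖f u‖₊ : ℝ≥0∞) ^ r * S.w u := by
            rw [mul_assoc, ← mul_assoc ((q : ℝ≥0∞)⁻¹),
              ENNReal.inv_mul_cancel (by exact_mod_cast hq) (by simp), one_mul]
    calc (∑' x, (‖S.hgrad eps f x‖₊ : ℝ≥0∞) ^ r * S.w x) ^ (1 / r)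
        ≤ (E ^ r * ∑' u, (‖f u‖₊ : ℝ≥0∞) ^ r * S.w u) ^ (1 / r) :=
          ENNReal.rpow_le_rpow key (by positivity)
      _ = E * (∑' u, (‖f u‖₊ : ℝ≥0∞) ^ r * S.w u) ^ (1 / r) := by
          rw [ENNReal.mul_rpow_of_nonneg _ _ (by positivity), ← ENNReal.rpow_mul,
            mul_one_div_cancel hr0.ne', ENNReal.rpow_one]

lemma wk_hgrad (eps f : S.V → ℂ) (hq : q ≠ 0) (hb : ∃ M : ℝ, ∀ x, ‖eps x‖ ≤ M) :
    S.wkNorm (S.hgrad eps f) ≤ (q : ℝ≥0∞) * S.epsSup eps * S.wkNorm f := by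
  by_cases h0 : S.epsSup eps = 0
  · rw [S.wkNorm_of_zero _ (fun x => ?_)]
    · exact zero_le
    · show (q : ℂ)⁻¹ * ∑' y : {y | S.pred y = x}, eps y.1 * f y.1 = 0
      have : ∀ y : {y | S.pred y = x}, eps y.1 * f y.1 = 0 := by
        intro y; rw [S.epsSup_zero_eq eps h0 y.1, zero_mul]
      rw [tsum_congr this, tsum_zero, mul_zero]
  · set c := (S.epsSup eps).toNNReal with hcdef
    have hc : (c : ℝ≥0∞) = S.epsSup eps := ENNReal.coe_toNNReal (S.epsSup_ne_top eps hb)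
    have hc0 : c ≠ 0 := by
      intro h; rw [h] at hc; exact h0 hc.symm
    have heps : ∀ x, (‖eps x‖₊ : ℝ≥0∞) ≤ (c : ℝ≥0∞) := by
      intro x; rw [hc]; exact S.coe_nnnorm_le_epsSup eps x
    refine iSup_le fun t => ?_
    have hsub : {x | t < ‖S.hgrad eps f x‖₊} ⊆ S.pred '' {u | t / c < ‖f u‖₊} := by
      intro x hx
      simp only [Set.mem_setOf_eq] at hx
      by_contra hcon
      have hbound : ∀ y : {y | S.pred y = x}, ¬ (t / c < ‖f y.1‖₊) := by
        intro y hy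
        exact hcon ⟨y.1, hy, y.2⟩
      have hfy : ∀ y : {y | S.pred y = x}, (‖f y.1‖₊ : ℝ≥0∞) ≤ ((t / c : ℝ≥0) : ℝ≥0∞) := by
        intro y
        exact_mod_cast not_lt.1 (hbound y)
      have : (‖S.hgrad eps f x‖₊ : ℝ≥0∞) ≤ (t : ℝ≥0∞) := by
        calc (‖S.hgrad eps f x‖₊ : ℝ≥0∞)
            ≤ (q : ℝ≥0∞)⁻¹ * ∑' y : {y | S.pred y = x}, ((‖eps y.1‖₊ : ℝ≥0∞) * ‖f y.1‖₊) :=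
              S.hgrad_nnnorm_le eps f hq x
          _ ≤ (q : ℝ≥0∞)⁻¹ * ((q : ℝ≥0∞) * ((c : ℝ≥0∞) * ((t / c : ℝ≥0) : ℝ≥0∞))) := by
              refine mul_le_mul_right (S.tsum_fiber_le_const hq x
                (fun v => (‖eps v‖₊ : ℝ≥0∞) * ‖f v‖₊) _ fun y => ?_) _
              exact mul_le_mul' (heps y.1) (hfy y)
          _ = (c : ℝ≥0∞) * ((t / c : ℝ≥0) : ℝ≥0∞) := by
              rw [← mul_assoc, ENNReal.inv_mul_cancel (by exact_mod_cast hq) (by simp), one_mul]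
          _ = (t : ℝ≥0∞) := by
              rw [← ENNReal.coe_mul, mul_div_cancel₀ _ hc0]
      exact absurd hx (not_lt.2 (by exact_mod_cast this))
    calc (t : ℝ≥0∞) * S.muS {x | t < ‖S.hgrad eps f x‖₊}
        ≤ (t : ℝ≥0∞) * S.muS (S.pred '' {u | t / c < ‖f u‖₊}) :=
          mul_le_mul_right (S.muS_mono hsub) _
      _ ≤ (t : ℝ≥0∞) * ((q : ℝ≥0∞) * S.muS {u | t / c < ‖f u‖₊}) :=
          mul_le_mul_right (S.muS_image_le hq _) _
      _ = (q : ℝ≥0∞) * ((c : ℝ≥0∞) * (((t / c : ℝ≥0) : ℝ≥0∞) * S.muS {u | t / c < ‖f u‖₊})) := by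
          have ht : ((t / c : ℝ≥0) : ℝ≥0∞) * (c : ℝ≥0∞) = (t : ℝ≥0∞) := by
            rw [← ENNReal.coe_mul, div_mul_cancel₀ _ hc0]
          rw [← ht]; ring
      _ ≤ (q : ℝ≥0∞) * S.epsSup eps * S.wkNorm f := by
          rw [mul_assoc, hc.symm]
          refine mul_le_mul_right (mul_le_mul_right ?_ _) _
          exact le_iSup (fun s : ℝ≥0 => (s : ℝ≥0∞) * S.muS {u | s < ‖f u‖₊}) (t / c)

end Eps

section Orth
variable (eps : S.V → ℂ)

lemma coe_nnnorm_wR (hq : q ≠ 0) (x : S.V) :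
    ((‖((S.wR x : ℝ) : ℂ)‖₊ : ℝ≥0∞)) = S.w x := by
  have hq' : (q : ℝ≥0) ≠ 0 := by exact_mod_cast hq
  rw [Complex.nnnorm_real, ← enorm_eq_nnnorm, Real.enorm_eq_ofReal (S.wR_pos hq x).le]
  have h1 : S.wR x = (((q : ℝ≥0) ^ (S.level x) : ℝ≥0) : ℝ) := by
    unfold wR; push_cast; ring
  rw [h1, ENNReal.ofReal_coe_nnreal]
  unfold w
  rw [ENNReal.rpow_intCast]
  exact ENNReal.coe_zpow hq' _

lemma tsum_iterate_pred_mul_w (hq : q ≠ 0) (n : ℕ) (g : S.V → ℝ≥0∞) :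
    ∑' x, g (S.pred^[n] x) * S.w x = ∑' u, g u * S.w u := by
  induction n generalizing g with
  | zero => simp
  | succ n ih =>
    have h1 : ∑' x, g (S.pred^[n+1] x) * S.w x
        = ∑' x, (fun v => g (S.pred^[n] v)) (S.pred x) * S.w x :=
      tsum_congr fun x => by rw [Function.iterate_succ_apply]
    rw [h1, S.tsum_pred_mul_w hq (fun v => g (S.pred^[n] v)), ih]

lemma sum_sq_ne_top (f : S.V → ℂ) (hf : S.lpNorm 2 f ≠ ∞) :
    ∑' x, ((‖f x‖₊ : ℝ≥0∞) * ‖f x‖₊) * S.w x ≠ ∞ := by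
  unfold lpNorm at hf
  rw [if_neg (by norm_num : (2 : ℝ≥0∞) ≠ ∞)] at hf
  have h2 : (2 : ℝ≥0∞).toReal = 2 := by norm_num
  intro hcon
  apply hf
  have hsum : ∑' x, (‖f x‖₊ : ℝ≥0∞) ^ (2 : ℝ≥0∞).toReal * S.w x = ∞ := by
    rw [← hcon]
    refine tsum_congr fun x => ?_
    rw [h2, show ((2 : ℝ) = ((2 : ℕ) : ℝ)) by norm_cast, ENNReal.rpow_natCast, pow_two]
  rw [hsum, ENNReal.top_rpow_of_pos (by rw [h2]; norm_num)]

lemma tsum_fiber_wC (hq : q ≠ 0) (x : S.V) :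
    ∑' y : {y | S.pred y = x}, ((S.wR y.1 : ℝ) : ℂ) = ((S.wR x : ℝ) : ℂ) := by
  rw [tsum_fintype]
  have hval : ∀ y : {y | S.pred y = x}, ((S.wR y.1 : ℝ) : ℂ) = (q : ℂ)⁻¹ * (S.wR x : ℝ) := by
    intro y
    rw [S.wR_fiber hq y.2]
    push_cast
    ring
  rw [Finset.sum_congr rfl (fun y _ => hval y), Finset.sum_const, Finset.card_univ]
  have hcard : Fintype.card {y | S.pred y = x} = q := by
    rw [← Nat.card_eq_fintype_card]; exact S.succ_card x
  rw [hcard, nsmul_eq_mul, ← mul_assoc]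
  rw [mul_inv_cancel₀ (by exact_mod_cast hq : (q : ℂ) ≠ 0), one_mul]

lemma fiber_conj_eps (hz : ∀ x : S.V, ∑' y : {y | S.pred y = x}, eps y.1 = 0) (x : S.V) :
    ∑' y : {y | S.pred y = x}, (starRingEnd ℂ) (eps y.1) = 0 := by
  rw [tsum_fintype, ← map_sum, ← tsum_fintype (L := SummationFilter.unconditional _), hz x, map_zero]

lemma tsum_fiber_groupC (A : S.V → ℂ) (hA : Summable A) :
    ∑' x, A x = ∑' u, ∑' y : {y | S.pred y = u}, A y.1 := by
  have h2 : Summable (fun p : Σ u : S.V, {y // S.pred y = u} => A p.2.1) :=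
    (Equiv.summable_iff S.fiberEquiv).mp (by exact hA)
  calc ∑' x, A x = ∑' p : Σ u : S.V, {y // S.pred y = u}, A p.2.1 := by
        rw [← S.fiberEquiv.tsum_eq (fun p : Σ u : S.V, {y // S.pred y = u} => A p.2.1)]
        exact tsum_congr fun x => rfl
    _ = ∑' u, ∑' y : {y // S.pred y = u}, A y.1 := h2.tsum_sigma
    _ = ∑' u, ∑' y : {y | S.pred y = u}, A y.1 := tsum_congr fun u => rfl

lemma stepC (hq : q ≠ 0) (g : S.V → ℂ)
    (hs : Summable fun x => g (S.pred x) * ((S.wR x : ℝ) : ℂ)) :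
    (∑' x, g (S.pred x) * ((S.wR x : ℝ) : ℂ) = ∑' u, g u * ((S.wR u : ℝ) : ℂ)) ∧
      Summable fun u => g u * ((S.wR u : ℝ) : ℂ) := by
  have hrow : ∀ u, ∑' y : {y | S.pred y = u}, g (S.pred y.1) * ((S.wR y.1 : ℝ) : ℂ)
      = g u * ((S.wR u : ℝ) : ℂ) := by
    intro u
    have h1 : ∀ y : {y | S.pred y = u},
        g (S.pred y.1) * ((S.wR y.1 : ℝ) : ℂ) = g u * ((S.wR y.1 : ℝ) : ℂ) := by
      intro y
      rw [show S.pred y.1 = u from y.2]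
    rw [tsum_congr h1, tsum_mul_left, S.tsum_fiber_wC hq u]
  constructor
  · rw [S.tsum_fiber_groupC _ hs]
    exact tsum_congr hrow
  · have h2 : Summable (fun p : Σ u : S.V, {y // S.pred y = u} =>
        g (S.pred p.2.1) * ((S.wR p.2.1 : ℝ) : ℂ)) :=
      (Equiv.summable_iff S.fiberEquiv).mp (by exact hs)
    exact h2.sigma.congr fun u => hrow u

lemma peelC (hq : q ≠ 0) (n : ℕ) (h : S.V → ℂ)
    (hs : Summable fun x => h (S.pred^[n] x) * ((S.wR x : ℝ) : ℂ)) :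
    (∑' x, h (S.pred^[n] x) * ((S.wR x : ℝ) : ℂ) = ∑' u, h u * ((S.wR u : ℝ) : ℂ)) ∧
      Summable fun u => h u * ((S.wR u : ℝ) : ℂ) := by
  induction n generalizing h with
  | zero =>
    constructor
    · exact tsum_congr fun x => by rw [Function.iterate_zero_apply]
    · exact hs.congr fun x => by rw [Function.iterate_zero_apply]
  | succ n ih =>
    have heq : (fun x => h (S.pred^[n+1] x) * ((S.wR x : ℝ) : ℂ))
        = fun x => (fun v => h (S.pred^[n] v)) (S.pred x) * ((S.wR x : ℝ) : ℂ) := by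
      funext x
      rw [Function.iterate_succ_apply]
    rw [heq] at hs
    obtain ⟨e1, s1⟩ := S.stepC hq (fun v => h (S.pred^[n] v)) hs
    obtain ⟨e2, s2⟩ := ih _ s1
    refine ⟨?_, s2⟩
    rw [show (∑' x, h (S.pred^[n+1] x) * ((S.wR x : ℝ) : ℂ))
      = ∑' x, (fun v => h (S.pred^[n] v)) (S.pred x) * ((S.wR x : ℝ) : ℂ) from by rw [heq]]
    exact e1.trans e2

lemma master_summable (hq : q ≠ 0) (hb : ∃ M : ℝ, ∀ x, ‖eps x‖ ≤ M)
    (f g : S.V → ℂ) (hf : S.lpNorm 2 f ≠ ∞) (hg : S.lpNorm 2 g ≠ ∞) (n m : ℕ) :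
    Summable fun x => S.hgradStar eps f (S.pred^[n] x)
      * (starRingEnd ℂ) (S.hgradStar eps g (S.pred^[m] x)) * ((S.wR x : ℝ) : ℂ) := by
  set E := S.epsSup eps with hE
  have hEtop : E ≠ ∞ := S.epsSup_ne_top eps hb
  -- bound for a single hgradStar square sum
  have sq_bound : ∀ (h : S.V → ℂ) (k : ℕ), S.lpNorm 2 h ≠ ∞ →
      ∑' x, ((‖S.hgradStar eps h (S.pred^[k] x)‖₊ : ℝ≥0∞)
        * ‖S.hgradStar eps h (S.pred^[k] x)‖₊) * S.w x ≠ ∞ := by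
    intro h k hh
    have e1 : ∑' x, ((‖S.hgradStar eps h (S.pred^[k] x)‖₊ : ℝ≥0∞)
          * ‖S.hgradStar eps h (S.pred^[k] x)‖₊) * S.w x
        = ∑' u, ((‖S.hgradStar eps h u‖₊ : ℝ≥0∞) * ‖S.hgradStar eps h u‖₊) * S.w u :=
      S.tsum_iterate_pred_mul_w hq k
        (fun u => (‖S.hgradStar eps h u‖₊ : ℝ≥0∞) * ‖S.hgradStar eps h u‖₊)
    rw [e1]
    have e2 : ∑' u, ((‖S.hgradStar eps h u‖₊ : ℝ≥0∞) * ‖S.hgradStar eps h u‖₊) * S.w u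
        ≤ (E * E) * ∑' v, ((‖h v‖₊ : ℝ≥0∞) * ‖h v‖₊) * S.w v := by
      calc ∑' u, ((‖S.hgradStar eps h u‖₊ : ℝ≥0∞) * ‖S.hgradStar eps h u‖₊) * S.w u
          ≤ ∑' u, ((E * E) * ((‖h (S.pred u)‖₊ : ℝ≥0∞) * ‖h (S.pred u)‖₊)) * S.w u := by
            refine Summable.tsum_le_tsum (fun u => mul_le_mul_left ?_ _)
              ENNReal.summable ENNReal.summable
            rw [S.hgradStar_nnnorm eps h u, ENNReal.coe_mul]
            calc ((‖eps u‖₊ : ℝ≥0∞) * ‖h (S.pred u)‖₊)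
                  * ((‖eps u‖₊ : ℝ≥0∞) * ‖h (S.pred u)‖₊)
                ≤ (E * (‖h (S.pred u)‖₊ : ℝ≥0∞)) * (E * (‖h (S.pred u)‖₊ : ℝ≥0∞)) := by
                  have := S.coe_nnnorm_le_epsSup eps u
                  exact mul_le_mul' (mul_le_mul' this le_rfl) (mul_le_mul' this le_rfl)
              _ = (E * E) * ((‖h (S.pred u)‖₊ : ℝ≥0∞) * ‖h (S.pred u)‖₊) := by ring
        _ = ∑' v, ((E * E) * ((‖h v‖₊ : ℝ≥0∞) * ‖h v‖₊)) * S.w v :=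
            S.tsum_pred_mul_w hq (fun v => (E * E) * ((‖h v‖₊ : ℝ≥0∞) * ‖h v‖₊))
        _ = (E * E) * ∑' v, ((‖h v‖₊ : ℝ≥0∞) * ‖h v‖₊) * S.w v := by
            rw [← ENNReal.tsum_mul_left]
            exact tsum_congr fun v => by ring
    refine ne_top_of_le_ne_top ?_ e2
    exact ENNReal.mul_ne_top (ENNReal.mul_ne_top hEtop hEtop) (S.sum_sq_ne_top h hh)
  -- main: ℝ≥0∞ sum of nnnorms is finite
  have hfin : ∑' x, (‖(S.hgradStar eps f (S.pred^[n] x)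
      * (starRingEnd ℂ) (S.hgradStar eps g (S.pred^[m] x)) * ((S.wR x : ℝ) : ℂ))‖₊ : ℝ≥0∞)
      ≠ ∞ := by
    have hb1 : ∀ x, (‖(S.hgradStar eps f (S.pred^[n] x)
        * (starRingEnd ℂ) (S.hgradStar eps g (S.pred^[m] x)) * ((S.wR x : ℝ) : ℂ))‖₊ : ℝ≥0∞)
        ≤ ((‖S.hgradStar eps f (S.pred^[n] x)‖₊ : ℝ≥0∞) * ‖S.hgradStar eps f (S.pred^[n] x)‖₊) * S.w x
          + ((‖S.hgradStar eps g (S.pred^[m] x)‖₊ : ℝ≥0∞) * ‖S.hgradStar eps g (S.pred^[m] x)‖₊) * S.w x := by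
      intro x
      set a : ℝ≥0∞ := (‖S.hgradStar eps f (S.pred^[n] x)‖₊ : ℝ≥0∞) with ha
      set b : ℝ≥0∞ := (‖S.hgradStar eps g (S.pred^[m] x)‖₊ : ℝ≥0∞) with hbb
      have hnorm : (‖(S.hgradStar eps f (S.pred^[n] x)
          * (starRingEnd ℂ) (S.hgradStar eps g (S.pred^[m] x)) * ((S.wR x : ℝ) : ℂ))‖₊ : ℝ≥0∞)
          = (a * b) * S.w x := by
        rw [nnnorm_mul, nnnorm_mul, RCLike.nnnorm_conj, ENNReal.coe_mul, ENNReal.coe_mul,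
          S.coe_nnnorm_wR hq x]
      rw [hnorm]
      have hab : a * b ≤ a * a + b * b := by
        rcases le_total a b with hle | hle
        · calc a * b ≤ b * b := mul_le_mul_left hle _
            _ ≤ a * a + b * b := le_add_self
        · calc a * b ≤ a * a := mul_le_mul_right hle _
            _ ≤ a * a + b * b := le_add_right le_rfl
      calc (a * b) * S.w x ≤ (a * a + b * b) * S.w x := mul_le_mul_left hab _
        _ = (a * a) * S.w x + (b * b) * S.w x := by ring
    refine ne_top_of_le_ne_top ?_
      (Summable.tsum_le_tsum hb1 ENNReal.summable ENNReal.summable)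
    rw [ENNReal.tsum_add]
    exact ENNReal.add_ne_top.2 ⟨sq_bound f n hf, sq_bound g m hg⟩
  have hsum : Summable fun x => (‖(S.hgradStar eps f (S.pred^[n] x)
      * (starRingEnd ℂ) (S.hgradStar eps g (S.pred^[m] x)) * ((S.wR x : ℝ) : ℂ))‖₊) :=
    ENNReal.tsum_coe_ne_top_iff_summable.1 hfin
  exact hsum.of_nnnorm

lemma orth_lt_zero (hq : q ≠ 0) (hz : ∀ x : S.V, ∑' y : {y | S.pred y = x}, eps y.1 = 0)
    (f g : S.V → ℂ) (j : ℕ)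
    (hs : Summable fun u => S.hgradStar eps f u
      * (starRingEnd ℂ) (S.hgradStar eps g (S.pred^[j+1] u)) * ((S.wR u : ℝ) : ℂ)) :
    ∑' u, S.hgradStar eps f u
      * (starRingEnd ℂ) (S.hgradStar eps g (S.pred^[j+1] u)) * ((S.wR u : ℝ) : ℂ) = 0 := by
  rw [S.tsum_fiber_groupC _ hs]
  have hrow : ∀ v, ∑' y : {y | S.pred y = v}, S.hgradStar eps f y.1
      * (starRingEnd ℂ) (S.hgradStar eps g (S.pred^[j+1] y.1)) * ((S.wR y.1 : ℝ) : ℂ) = 0 := by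
    intro v
    have hterm : ∀ y : {y | S.pred y = v}, S.hgradStar eps f y.1
        * (starRingEnd ℂ) (S.hgradStar eps g (S.pred^[j+1] y.1)) * ((S.wR y.1 : ℝ) : ℂ)
        = (starRingEnd ℂ) (eps y.1) * (f v
          * (starRingEnd ℂ) (S.hgradStar eps g (S.pred^[j] v)) * ((q : ℂ)⁻¹ * (S.wR v : ℝ))) := by
      intro y
      have hy : S.pred y.1 = v := y.2
      show (starRingEnd ℂ) (eps y.1) * f (S.pred y.1)
          * (starRingEnd ℂ) (S.hgradStar eps g (S.pred^[j+1] y.1)) * ((S.wR y.1 : ℝ) : ℂ) = _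
      rw [Function.iterate_succ_apply, hy, S.wR_fiber hq hy]
      push_cast
      ring
    rw [tsum_congr hterm, tsum_mul_right, S.fiber_conj_eps eps hz v, zero_mul]
  rw [tsum_congr hrow, tsum_zero]

lemma inner2_conj (a b : S.V → ℂ) : S.inner2 a b = (starRingEnd ℂ) (S.inner2 b a) := by
  unfold inner2
  rw [show ((starRingEnd ℂ) (∑' x, b x * (starRingEnd ℂ) (a x) * ((S.wR x : ℝ) : ℂ)))
    = star (∑' x, b x * (starRingEnd ℂ) (a x) * ((S.wR x : ℝ) : ℂ)) from rfl, tsum_star]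
  refine tsum_congr fun x => ?_
  show a x * (starRingEnd ℂ) (b x) * ((S.wR x : ℝ) : ℂ)
    = (starRingEnd ℂ) (b x * (starRingEnd ℂ) (a x) * ((S.wR x : ℝ) : ℂ))
  rw [map_mul, map_mul, Complex.conj_conj, Complex.conj_ofReal]
  ring

end Orth

end FlowTree
end Helpers
/-- properties of the ε-horizontal gradient: `∇_ε = ∇_ε ∇`, `L^p` and
`L^{1,∞}` bounds for `∇_ε*` and `∇_ε`, and the orthogonality relations
`⟨Σⁿ∇_ε* f, Σᵐ∇_ε* g⟩ = δ_{nm} ⟨∇_ε* f, ∇_ε* g⟩`. -/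
theorem horizontal_gradient_properties {q : ℕ} (hq : 2 ≤ q) (S : FlowTree q)
    (eps : S.V → ℂ) (hb : ∃ M : ℝ, ∀ x, ‖eps x‖ ≤ M)
    (hz : ∀ x : S.V, ∑' y : {y | S.pred y = x}, eps y.1 = 0) :
    (∀ f : S.V → ℂ, S.hgrad eps f = S.hgrad eps (S.grad f)) ∧
    (∀ p : ℝ≥0∞, 1 ≤ p → ∀ f : S.V → ℂ,
      S.lpNorm p (S.hgradStar eps f) ≤ S.epsSup eps * S.lpNorm p f) ∧
    (∀ f : S.V → ℂ, S.wkNorm (S.hgradStar eps f) ≤ S.epsSup eps * S.wkNorm f) ∧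
    (∀ p : ℝ≥0∞, 1 ≤ p → ∀ f : S.V → ℂ,
      S.lpNorm p (S.hgrad eps f) ≤ S.epsSup eps * S.lpNorm p f) ∧
    (∀ f : S.V → ℂ, S.wkNorm (S.hgrad eps f) ≤ (q : ℝ≥0∞) * S.epsSup eps * S.wkNorm f) ∧
    (∀ f g : S.V → ℂ, S.lpNorm 2 f ≠ ∞ → S.lpNorm 2 g ≠ ∞ → ∀ n m : ℕ,
      S.inner2 (fun x => S.hgradStar eps f (S.pred^[n] x))
          (fun x => S.hgradStar eps g (S.pred^[m] x))
        = if n = m then S.inner2 (S.hgradStar eps f) (S.hgradStar eps g) else 0) := by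
  have hq0 : q ≠ 0 := by omega
  refine ⟨fun f => S.hgrad_grad eps f hz, fun p hp f => S.lp_hgradStar eps f hq0 p hp,
    fun f => S.wk_hgradStar eps f hq0 hb, fun p hp f => S.lp_hgrad eps f hq0 p hp,
    fun f => S.wk_hgrad eps f hq0 hb, ?_⟩
  intro f g hf hg n m
  have key : ∀ (f g : S.V → ℂ), S.lpNorm 2 f ≠ ∞ → S.lpNorm 2 g ≠ ∞ → ∀ n m : ℕ, n < m →
      S.inner2 (fun x => S.hgradStar eps f (S.pred^[n] x))
        (fun x => S.hgradStar eps g (S.pred^[m] x)) = 0 := by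
    intro f g hf hg n m hlt
    obtain ⟨j, hj⟩ : ∃ j : ℕ, m = (j + 1) + n := ⟨m - n - 1, by omega⟩
    subst hj
    have hsum := S.master_summable eps hq0 hb f g hf hg n ((j + 1) + n)
    have heq : (fun x => S.hgradStar eps f (S.pred^[n] x)
        * (starRingEnd ℂ) (S.hgradStar eps g (S.pred^[(j + 1) + n] x)) * ((S.wR x : ℝ) : ℂ))
        = fun x => (fun u => S.hgradStar eps f u
          * (starRingEnd ℂ) (S.hgradStar eps g (S.pred^[j + 1] u))) (S.pred^[n] x)
            * ((S.wR x : ℝ) : ℂ) := by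
      funext x
      rw [Function.iterate_add_apply]
    rw [heq] at hsum
    obtain ⟨e1, s1⟩ := S.peelC hq0 n (fun u => S.hgradStar eps f u
      * (starRingEnd ℂ) (S.hgradStar eps g (S.pred^[j + 1] u))) hsum
    show (∑' x, S.hgradStar eps f (S.pred^[n] x)
      * (starRingEnd ℂ) (S.hgradStar eps g (S.pred^[(j + 1) + n] x)) * ((S.wR x : ℝ) : ℂ)) = 0
    rw [heq, e1]
    exact S.orth_lt_zero eps hq0 hz f g j s1
  split_ifs with hnm
  · subst hnm
    have hsum := S.master_summable eps hq0 hb f g hf hg n n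
    show (∑' x, S.hgradStar eps f (S.pred^[n] x)
        * (starRingEnd ℂ) (S.hgradStar eps g (S.pred^[n] x)) * ((S.wR x : ℝ) : ℂ))
      = ∑' u, S.hgradStar eps f u * (starRingEnd ℂ) (S.hgradStar eps g u) * ((S.wR u : ℝ) : ℂ)
    exact (S.peelC hq0 n
      (fun u => S.hgradStar eps f u * (starRingEnd ℂ) (S.hgradStar eps g u)) hsum).1
  · rcases Nat.lt_or_ge n m with hlt | hge
    · exact key f g hf hg n m hlt
    · have hlt : m < n := by omega
      rw [S.inner2_conj, key g f hg hf m n hlt, map_zero]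
end

section
/- Let F ∈ ℓ²(ℕ). For every finitely supported f : T → ℂ, the function 𝒫f(x) = Σ_{n≥0} F(n) ∇_ε* f(𝔭ⁿ(x)) (for each x only finitely many terms are nonzero) satisfies ‖𝒫f‖_{L²(μ)} = ‖F‖_{ℓ²(ℕ)} ‖∇_ε* f‖_{L²(μ)} ≤ ‖F‖_{ℓ²(ℕ)} · ‖ε‖_∞ · ‖f‖_{L²(μ)}; hence 𝒫 extends to a bounded operator on L²(μ) with norm at most ‖F‖_{ℓ²(ℕ)} ‖ε‖_∞. -/
open MeasureTheory ENNReal Set Function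
open scoped NNReal ENNReal Classical

/- ===== Auxiliary lemmas for STATEMENT 15 ===== -/

open ComplexConjugate in
lemma auxP15_trivial : True := trivial

section AuxP15

/-- tsum over a finite set as a finite sum. -/
lemma auxP15_tsum_finset {α : Type*} {M : Type*} [AddCommMonoid M] [TopologicalSpace M]
    {s : Set α} (hs : s.Finite) (f : α → M) :
    ∑' y : s, f y.1 = ∑ y ∈ hs.toFinset, f y := by
  rw [tsum_subtype]
  rw [tsum_eq_sum (s := hs.toFinset)
    (fun b hb => Set.indicator_of_notMem (fun hbs => hb (hs.mem_toFinset.mpr hbs)) f)]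
  exact Finset.sum_congr rfl fun y hy => Set.indicator_of_mem (hs.mem_toFinset.mp hy) f

/-- fiberwise decomposition of an `ℝ≥0∞`-valued tsum. -/
lemma auxP15_tsum_fiber {α β : Type*} (φ : α → β) (g : α → ℝ≥0∞) :
    ∑' x, g x = ∑' b, ∑' x : {x | φ x = b}, g x.1 := by
  rw [← (Equiv.sigmaFiberEquiv φ).tsum_eq g]
  exact ENNReal.tsum_sigma (fun b (x : {x | φ x = b}) => g x.1)

end AuxP15

namespace FlowTree

variable {q : ℕ} (S : FlowTree q)

lemma auxP15_level_iter (n : ℕ) (x : S.V) : S.level (S.pred^[n] x) = S.level x + n := by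
  induction n with
  | zero => simp
  | succ n ih =>
    rw [Function.iterate_succ_apply', S.level_pred, ih]
    push_cast
    ring

lemma auxP15_fiber_finite (n : ℕ) (a : S.V) : {x : S.V | S.pred^[n] x = a}.Finite := by
  induction n generalizing a with
  | zero =>
    simp only [Function.iterate_zero, id_eq]
    exact (Set.finite_singleton a).subset (fun x hx => hx)
  | succ n ih =>
    refine ((S.succ_finite a).biUnion (fun v _ => ih v)).subset ?_
    intro x hx
    simp only [Set.mem_iUnion, Set.mem_setOf_eq]
    refine ⟨S.pred^[n] x, ?_, rfl⟩
    exact (Function.iterate_succ_apply' S.pred n x).symm.trans hx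

lemma auxP15_succ_exists (hq : 2 ≤ q) (a : S.V) : ∃ v, S.pred v = a := by
  have h := S.succ_card a
  have h2 : 0 < Nat.card {y // S.pred y = a} := by omega
  rcases (Nat.card_pos_iff.mp h2).1 with ⟨⟨v, hv⟩⟩
  exact ⟨v, hv⟩

lemma auxP15_fiber_exists (hq : 2 ≤ q) (n : ℕ) (a : S.V) : ∃ x, S.pred^[n] x = a := by
  induction n generalizing a with
  | zero => exact ⟨a, rfl⟩
  | succ n ih =>
    obtain ⟨v, hv⟩ := S.auxP15_succ_exists hq a
    obtain ⟨x, hx⟩ := ih v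
    exact ⟨x, by rw [Function.iterate_succ_apply', hx, hv]⟩

lemma auxP15_w_coe (hq : 2 ≤ q) (x : S.V) :
    S.w x = (((q : ℝ≥0) ^ (S.level x) : ℝ≥0) : ℝ≥0∞) := by
  have hq0 : (q : ℝ≥0) ≠ 0 := Nat.cast_ne_zero.mpr (by omega)
  rw [FlowTree.w, ENNReal.rpow_intCast, ← ENNReal.coe_natCast q, ENNReal.coe_zpow hq0]

lemma auxP15_wR_coe (x : S.V) : S.wR x = (((q : ℝ≥0) ^ (S.level x) : ℝ≥0) : ℝ) := by
  rw [FlowTree.wR, NNReal.coe_zpow, NNReal.coe_natCast]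

lemma auxP15_wR_nonneg (x : S.V) : 0 ≤ S.wR x := by
  rw [S.auxP15_wR_coe x]; positivity

lemma auxP15_w_ofReal (hq : 2 ≤ q) (x : S.V) : S.w x = ENNReal.ofReal (S.wR x) := by
  rw [S.auxP15_w_coe hq, S.auxP15_wR_coe, ENNReal.ofReal_coe_nnreal]

lemma auxP15_succ_card_finset (z : S.V) : (S.succ_finite z).toFinset.card = q := by
  have h := S.succ_card z
  have h2 : Nat.card {y // S.pred y = z} = ({y : S.V | S.pred y = z}).ncard :=
    Nat.card_coe_set_eq _
  rw [h2, Set.ncard_eq_toFinset_card _ (S.succ_finite z)] at h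
  exact h

lemma auxP15_succ_w_sum (hq : 2 ≤ q) (z : S.V) :
    ∑ x ∈ (S.succ_finite z).toFinset, S.w x = S.w z := by
  have hq0 : (q : ℝ≥0) ≠ 0 := Nat.cast_ne_zero.mpr (by omega)
  have hconst : ∀ x ∈ (S.succ_finite z).toFinset,
      S.w x = (((q : ℝ≥0) ^ (S.level z - 1) : ℝ≥0) : ℝ≥0∞) := by
    intro x hx
    have hpx : S.pred x = z := (S.succ_finite z).mem_toFinset.mp hx
    have hl := S.level_pred x
    rw [hpx] at hl
    rw [S.auxP15_w_coe hq]
    congr 2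
    omega
  rw [Finset.sum_congr rfl hconst, Finset.sum_const, S.auxP15_succ_card_finset z,
    nsmul_eq_mul, S.auxP15_w_coe hq z, ← ENNReal.coe_natCast q, ← ENNReal.coe_mul]
  congr 1
  rw [mul_comm, ← zpow_add_one₀ hq0]
  congr 1
  omega

lemma auxP15_pullback (hq : 2 ≤ q) (F : S.V → ℝ≥0∞) :
    ∑' x, F (S.pred x) * S.w x = ∑' z, F z * S.w z := by
  rw [auxP15_tsum_fiber S.pred (fun x => F (S.pred x) * S.w x)]
  refine tsum_congr fun z => ?_
  rw [auxP15_tsum_finset (S.succ_finite z) (fun x => F (S.pred x) * S.w x)]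
  calc ∑ x ∈ (S.succ_finite z).toFinset, F (S.pred x) * S.w x
      = ∑ x ∈ (S.succ_finite z).toFinset, F z * S.w x := by
        refine Finset.sum_congr rfl fun x hx => ?_
        rw [(S.succ_finite z).mem_toFinset.mp hx]
    _ = F z * ∑ x ∈ (S.succ_finite z).toFinset, S.w x := by rw [Finset.mul_sum]
    _ = F z * S.w z := by rw [S.auxP15_succ_w_sum hq z]

lemma auxP15_pullback_iter (hq : 2 ≤ q) (n : ℕ) (F : S.V → ℝ≥0∞) :
    ∑' x, F (S.pred^[n] x) * S.w x = ∑' z, F z * S.w z := by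
  induction n generalizing F with
  | zero => simp
  | succ n ih =>
    have h1 : ∑' x, F (S.pred^[n+1] x) * S.w x
        = ∑' x, (fun y => F (S.pred^[n] y)) (S.pred x) * S.w x := by
      refine tsum_congr fun x => ?_
      rw [Function.iterate_succ_apply]
    rw [h1, S.auxP15_pullback hq (fun y => F (S.pred^[n] y))]
    exact ih F

lemma auxP15_fiber_w_sum (hq : 2 ≤ q) (n : ℕ) (a : S.V) :
    ∑' x : {x : S.V | S.pred^[n] x = a}, S.w x.1 = S.w a := by
  have h' : ∑' x, (if S.pred^[n] x = a then (1 : ℝ≥0∞) else 0) * S.w x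
      = ∑' z, (if z = a then (1 : ℝ≥0∞) else 0) * S.w z :=
    S.auxP15_pullback_iter hq n (fun z => if z = a then (1 : ℝ≥0∞) else 0)
  have hr : ∑' z, (if z = a then (1 : ℝ≥0∞) else 0) * S.w z = S.w a := by
    rw [tsum_eq_single a (fun b hb => by simp [hb])]
    simp
  have hl : ∑' x, (if S.pred^[n] x = a then (1 : ℝ≥0∞) else 0) * S.w x
      = ∑' x : {x : S.V | S.pred^[n] x = a}, S.w x.1 := by
    rw [tsum_subtype]
    refine tsum_congr fun x => ?_
    by_cases hx : S.pred^[n] x = a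
    · rw [if_pos hx, one_mul]
      exact (Set.indicator_of_mem (show x ∈ {x : S.V | S.pred^[n] x = a} from hx) S.w).symm
    · rw [if_neg hx, zero_mul]
      exact (Set.indicator_of_notMem (show x ∉ {x : S.V | S.pred^[n] x = a} from hx) S.w).symm
  rw [← hl, h', hr]

lemma auxP15_fiber_wR_sum (hq : 2 ≤ q) (n : ℕ) (a : S.V) :
    ∑ x ∈ (S.auxP15_fiber_finite n a).toFinset, S.wR x = S.wR a := by
  have h := S.auxP15_fiber_w_sum hq n a
  rw [auxP15_tsum_finset (S.auxP15_fiber_finite n a) S.w] at h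
  have h2 : ENNReal.ofReal (∑ x ∈ (S.auxP15_fiber_finite n a).toFinset, S.wR x)
      = ENNReal.ofReal (S.wR a) := by
    rw [ENNReal.ofReal_sum_of_nonneg (fun i _ => S.auxP15_wR_nonneg i)]
    simp_rw [← S.auxP15_w_ofReal hq]
    rw [h, S.auxP15_w_ofReal hq]
  exact (ENNReal.ofReal_eq_ofReal_iff
    (Finset.sum_nonneg fun i _ => S.auxP15_wR_nonneg i) (S.auxP15_wR_nonneg a)).mp h2

end FlowTree
/-- for `F ∈ ℓ²(ℕ)`, the operator `𝒫f = Σ_{n≥0} F(n) Σⁿ∇_ε* f` satisfies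
`‖𝒫f‖₂ = ‖F‖_{ℓ²} ‖∇_ε* f‖₂ ≤ ‖F‖_{ℓ²} ‖ε‖_∞ ‖f‖₂`. -/
theorem P_operator_L2 {q : ℕ} (hq : 2 ≤ q) (S : FlowTree q)
    (eps : S.V → ℂ) (hb : ∃ M : ℝ, ∀ x, ‖eps x‖ ≤ M)
    (hz : ∀ x : S.V, ∑' y : {y | S.pred y = x}, eps y.1 = 0)
    (F : ℕ → ℂ) (hF : Summable (fun n => ‖F n‖ ^ 2))
    (f : S.V → ℂ) (hf : (Function.support f).Finite) :
    S.lpNorm 2 (fun x => ∑' n : ℕ, F n * S.hgradStar eps f (S.pred^[n] x))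
        = (∑' n : ℕ, (‖F n‖₊ : ℝ≥0∞) ^ (2 : ℝ)) ^ (1/(2:ℝ)) *
            S.lpNorm 2 (S.hgradStar eps f) ∧
    S.lpNorm 2 (fun x => ∑' n : ℕ, F n * S.hgradStar eps f (S.pred^[n] x))
        ≤ (∑' n : ℕ, (‖F n‖₊ : ℝ≥0∞) ^ (2 : ℝ)) ^ (1/(2:ℝ)) * S.epsSup eps *
            S.lpNorm 2 f := by
    classical
  set g : S.V → ℂ := S.hgradStar eps f with hgdef
  set P : S.V → ℂ := fun x => ∑' n : ℕ, F n * g (S.pred^[n] x) with hPdef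
  set C : ℝ≥0∞ := ∑' n : ℕ, (‖F n‖₊ : ℝ≥0∞) ^ (2 : ℝ) with hCdef
  have hgx : ∀ z, g z = (starRingEnd ℂ) (eps z) * f (S.pred z) := fun z => rfl
  have hgsupp : (Function.support g).Finite := by
    refine (hf.biUnion (fun z _ => S.succ_finite z)).subset ?_
    intro x hx
    have hgx0 : g x ≠ 0 := hx
    have hfx : f (S.pred x) ≠ 0 := fun h0 => hgx0 (by rw [hgx x, h0, mul_zero])
    simp only [Set.mem_iUnion]
    exact ⟨S.pred x, hfx, rfl⟩
  have hconv0 : ∀ z : ℂ, ENNReal.ofReal (‖z‖ ^ 2) = (‖z‖₊ : ℝ≥0∞) ^ (2 : ℝ) := by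
    intro z
    rw [← enorm_eq_nnnorm, ← ofReal_norm,
      ENNReal.ofReal_rpow_of_nonneg (norm_nonneg z) (by norm_num : (0:ℝ) ≤ 2)]
    congr 1
    rw [show (2:ℝ) = ((2:ℕ):ℝ) by norm_num, Real.rpow_natCast]
  have hconv : ∀ (z : ℂ) (x : S.V),
      ENNReal.ofReal (‖z‖ ^ 2 * S.wR x) = (‖z‖₊ : ℝ≥0∞) ^ (2 : ℝ) * S.w x := by
    intro z x
    rw [ENNReal.ofReal_mul (sq_nonneg _), hconv0 z, ← S.auxP15_w_ofReal hq x]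
  have key : ∑' x, (‖P x‖₊ : ℝ≥0∞) ^ (2:ℝ) * S.w x
      = C * ∑' z, (‖g z‖₊ : ℝ≥0∞) ^ (2:ℝ) * S.w z := by
    by_cases hA0 : ∀ z, g z = 0
    · have hP0 : ∀ x, P x = 0 := by
        intro x
        simp only [hPdef]
        simp [hA0]
      have hz1 : ∑' x, (‖P x‖₊ : ℝ≥0∞) ^ (2:ℝ) * S.w x = 0 := by
        refine (tsum_congr fun x => ?_).trans (tsum_zero (β := S.V))
        rw [hP0 x, nnnorm_zero, ENNReal.coe_zero,
          ENNReal.zero_rpow_of_pos (by norm_num : (0:ℝ) < 2), zero_mul]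
      have hz2 : ∑' z, (‖g z‖₊ : ℝ≥0∞) ^ (2:ℝ) * S.w z = 0 := by
        refine (tsum_congr fun z => ?_).trans (tsum_zero (β := S.V))
        rw [hA0 z, nnnorm_zero, ENNReal.coe_zero,
          ENNReal.zero_rpow_of_pos (by norm_num : (0:ℝ) < 2), zero_mul]
      rw [hz1, hz2, mul_zero]
    · push_neg at hA0
      obtain ⟨z0, hz0⟩ := hA0
      set A : Finset S.V := hgsupp.toFinset with hAdef
      have hgA : ∀ z, g z ≠ 0 → z ∈ A := fun z hz' => hgsupp.mem_toFinset.mpr hz'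
      set L : Finset ℤ := A.image S.level with hLdef
      have hLne : L.Nonempty := ⟨S.level z0, Finset.mem_image_of_mem _ (hgA _ hz0)⟩
      set M : ℤ := L.max' hLne with hMdef
      have hAL : ∀ a ∈ A, S.level a ∈ L := fun a ha => Finset.mem_image_of_mem _ ha
      have hALM : ∀ a ∈ A, S.level a ≤ M := fun a ha => Finset.le_max' L _ (hAL a ha)
      set N : ℤ → Finset ℕ := fun j => (L.filter (fun i => j ≤ i)).image (fun i => (i - j).toNat)
        with hNdef
      have hNmem : ∀ (j : ℤ) (n : ℕ), n ∈ N j ↔ (j + (n:ℤ)) ∈ L := by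
        intro j n
        simp only [hNdef, Finset.mem_image, Finset.mem_filter]
        constructor
        · rintro ⟨i, ⟨hiL, hji⟩, hni⟩
          have : j + (n:ℤ) = i := by omega
          rw [this]; exact hiL
        · intro hL'
          exact ⟨j + n, ⟨hL', by omega⟩, by omega⟩
      set Wl : ℤ → ℝ≥0∞ := fun i => ∑ a ∈ A.filter (fun a => S.level a = i),
        (‖g a‖₊ : ℝ≥0∞) ^ (2:ℝ) * S.w a with hWldef
      have hWl0 : ∀ (j : ℤ) (n : ℕ), n ∉ N j → Wl (j + n) = 0 := by
        intro j n hn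
        have hemp : A.filter (fun a => S.level a = j + (n:ℤ)) = ∅ := by
          refine Finset.filter_eq_empty_iff.mpr ?_
          intro a ha hlev
          exact hn ((hNmem j n).mpr (hlev ▸ hAL a ha))
        simp only [hWldef, hemp, Finset.sum_empty]
      have hWtot : ∑' i : ℤ, Wl i = ∑' z, (‖g z‖₊ : ℝ≥0∞) ^ (2:ℝ) * S.w z := by
        rw [auxP15_tsum_fiber S.level (fun z => (‖g z‖₊ : ℝ≥0∞) ^ (2:ℝ) * S.w z)]
        refine tsum_congr fun i => ?_
        rw [tsum_subtype {z : S.V | S.level z = i} (fun z => (‖g z‖₊ : ℝ≥0∞) ^ (2:ℝ) * S.w z)]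
        have hvanA : ∀ z ∉ A.filter (fun a => S.level a = i),
            Set.indicator {z : S.V | S.level z = i}
              (fun z => (‖g z‖₊ : ℝ≥0∞) ^ (2:ℝ) * S.w z) z = 0 := by
          intro z hzf
          by_cases hlz : S.level z = i
          · have hzA : g z = 0 := by
              by_contra h0
              exact hzf (Finset.mem_filter.mpr ⟨hgA z h0, hlz⟩)
            rw [Set.indicator_of_mem (show z ∈ {z : S.V | S.level z = i} from hlz)]
            rw [hzA, nnnorm_zero, ENNReal.coe_zero,
              ENNReal.zero_rpow_of_pos (by norm_num : (0:ℝ) < 2), zero_mul]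
          · exact Set.indicator_of_notMem (show z ∉ {z : S.V | S.level z = i} from hlz) _
        rw [tsum_eq_sum hvanA]
        simp only [hWldef]
        refine Finset.sum_congr rfl fun a ha => ?_
        have hla : S.level a = i := (Finset.mem_filter.mp ha).2
        exact (Set.indicator_of_mem (show a ∈ {z : S.V | S.level z = i} from hla)
          (fun z => (‖g z‖₊ : ℝ≥0∞) ^ (2:ℝ) * S.w z)).symm
      have hq0R : (q:ℝ) ≠ 0 := Nat.cast_ne_zero.mpr (by omega)
      have hwRv : ∀ v : S.V, S.wR v = S.wR (S.pred v) / (q:ℝ) := by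
        intro v
        rw [show S.wR v = (q:ℝ) ^ (S.level v) from rfl,
          show S.wR (S.pred v) = (q:ℝ) ^ (S.level (S.pred v)) from rfl,
          S.level_pred v, zpow_add_one₀ hq0R, mul_div_cancel_right₀ _ hq0R]
      have hepsS : ∀ u : S.V, ∑ v ∈ (S.succ_finite u).toFinset, eps v = 0 := by
        intro u
        rw [← auxP15_tsum_finset (S.succ_finite u) eps]
        exact hz u
      have hstep : ∀ j : ℤ,
          (∑' x : {x : S.V | S.level x = j}, (‖P x.1‖₊ : ℝ≥0∞) ^ (2:ℝ) * S.w x.1)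
            = ∑' n : ℕ, (‖F n‖₊ : ℝ≥0∞) ^ (2:ℝ) * Wl (j + n) := by
        intro j
        set Sj : Finset S.V := ((Finset.range ((M - j).toNat + 1)).biUnion
            (fun n => A.biUnion (fun a => (S.auxP15_fiber_finite n a).toFinset))).filter
            (fun x => S.level x = j) with hSjdef
        have hSjlev : ∀ x ∈ Sj, S.level x = j := fun x hx => (Finset.mem_filter.mp hx).2
        have hSjmem : ∀ (n : ℕ) (a : S.V), a ∈ A → S.level a = j + n →
            ∀ x, S.pred^[n] x = a → x ∈ Sj := by
          intro n a ha hlev x hxa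
          have hlx : S.level x = j := by
            have h1 := S.auxP15_level_iter n x
            rw [hxa] at h1
            omega
          refine Finset.mem_filter.mpr ⟨Finset.mem_biUnion.mpr ⟨n, ?_,
            Finset.mem_biUnion.mpr ⟨a, ha, (S.auxP15_fiber_finite n a).mem_toFinset.mpr hxa⟩⟩, hlx⟩
          have hM' := hALM a ha
          refine Finset.mem_range.mpr ?_
          omega
        have hfib : ∀ (n : ℕ) (a : S.V), a ∈ A → S.level a = j + n →
            Sj.filter (fun x => S.pred^[n] x = a) = (S.auxP15_fiber_finite n a).toFinset := by
          intro n a ha hlev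
          ext x
          simp only [Finset.mem_filter, Set.Finite.mem_toFinset, Set.mem_setOf_eq]
          exact ⟨fun h => h.2, fun h => ⟨hSjmem n a ha hlev x h, h⟩⟩
        have hPx : ∀ x, S.level x = j → P x = ∑ n ∈ N j, F n * g (S.pred^[n] x) := by
          intro x hx
          simp only [hPdef]
          refine tsum_eq_sum ?_
          intro n hn
          rcases eq_or_ne (g (S.pred^[n] x)) 0 with h0 | h0
          · rw [h0, mul_zero]
          · exfalso
            apply hn
            rw [hNmem]
            have h1 := S.auxP15_level_iter n x
            rw [hx] at h1
            rw [← h1]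
            exact hAL _ (hgA _ h0)
        have hvanP : ∀ x, S.level x = j → x ∉ Sj → P x = 0 := by
          intro x hx hns
          have hgz : ∀ n : ℕ, g (S.pred^[n] x) = 0 := by
            intro n
            by_contra h0
            have ha := hgA _ h0
            have hl := S.auxP15_level_iter n x
            rw [hx] at hl
            exact hns (hSjmem n _ ha hl x rfl)
          simp only [hPdef]
          simp [hgz]
        have hlevt : ∀ (n : ℕ) (v : S.V), v ∈ Sj.image (S.pred^[n]) → S.level v = j + n := by
          intro n v hv
          obtain ⟨x, hx, rfl⟩ := Finset.mem_image.mp hv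
          rw [S.auxP15_level_iter n x, hSjlev x hx]
        have htA : ∀ (n : ℕ), n ∈ N j → ∀ a, a ∈ A → S.level a = j + n →
            a ∈ Sj.image (S.pred^[n]) := by
          intro n hn a ha hlev
          obtain ⟨x, hx⟩ := S.auxP15_fiber_exists hq n a
          exact Finset.mem_image.mpr ⟨x, hSjmem n a ha hlev x hx, hx⟩
        have hI : ∀ n m : ℕ, n ≤ m →
            (∑ x ∈ Sj, g (S.pred^[n] x) * (starRingEnd ℂ) (g (S.pred^[m] x)) * (S.wR x : ℂ))
              = ∑ v ∈ Sj.image (S.pred^[n]),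
                  g v * (starRingEnd ℂ) (g (S.pred^[m - n] v)) * (S.wR v : ℂ) := by
          intro n m hnm
          rw [← Finset.sum_fiberwise_of_maps_to
            (fun x hx => Finset.mem_image_of_mem (S.pred^[n]) hx)
            (fun x => g (S.pred^[n] x) * (starRingEnd ℂ) (g (S.pred^[m] x)) * (S.wR x : ℂ))]
          refine Finset.sum_congr rfl fun v hv => ?_
          have hx2m : ∀ x ∈ Sj.filter (fun x => S.pred^[n] x = v),
              g (S.pred^[n] x) * (starRingEnd ℂ) (g (S.pred^[m] x)) * (S.wR x : ℂ)
                = g v * (starRingEnd ℂ) (g (S.pred^[m - n] v)) * (S.wR x : ℂ) := by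
            intro x hx
            obtain ⟨-, hx2⟩ := Finset.mem_filter.mp hx
            have hm' : S.pred^[m] x = S.pred^[m - n] v := by
              rw [← hx2, ← Function.iterate_add_apply]
              congr 1
              omega
            rw [hx2, hm']
          rw [Finset.sum_congr rfl hx2m]
          rcases eq_or_ne (g v) 0 with h0 | h0
          · simp [h0]
          · have ha := hgA _ h0
            have hlev : S.level v = j + n := hlevt n v hv
            rw [hfib n v ha hlev, ← Finset.mul_sum]
            congr 1
            rw [← Complex.ofReal_sum, S.auxP15_fiber_wR_sum hq n v]
        have hzero : ∀ n, n ∈ N j → ∀ m, n < m →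
            (∑ v ∈ Sj.image (S.pred^[n]),
              g v * (starRingEnd ℂ) (g (S.pred^[m - n] v)) * (S.wR v : ℂ)) = 0 := by
          intro n hn m hnm
          have hsub : Sj.image (S.pred^[n]) ⊆ ((Sj.image (S.pred^[n])).image S.pred).biUnion
              (fun u => (S.succ_finite u).toFinset) := by
            intro v hv
            exact Finset.mem_biUnion.mpr ⟨S.pred v, Finset.mem_image_of_mem _ hv,
              (S.succ_finite _).mem_toFinset.mpr rfl⟩
          have hvan2 : ∀ v ∈ ((Sj.image (S.pred^[n])).image S.pred).biUnion
              (fun u => (S.succ_finite u).toFinset), v ∉ Sj.image (S.pred^[n]) →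
              g v * (starRingEnd ℂ) (g (S.pred^[m - n] v)) * (S.wR v : ℂ) = 0 := by
            intro v hv hnv
            rcases eq_or_ne (g v) 0 with h0 | h0
            · rw [h0, zero_mul, zero_mul]
            · exfalso
              obtain ⟨u, hu, hvu⟩ := Finset.mem_biUnion.mp hv
              obtain ⟨v', hv', rfl⟩ := Finset.mem_image.mp hu
              have h1 : S.pred v = S.pred v' := (S.succ_finite _).mem_toFinset.mp hvu
              have hlv' : S.level v' = j + n := hlevt n v' hv'
              have hlv : S.level v = j + n := by
                have e1 := S.level_pred v
                have e2 := S.level_pred v'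
                rw [h1] at e1
                omega
              exact hnv (htA n hn v (hgA v h0) hlv)
          have hdisj : (↑((Sj.image (S.pred^[n])).image S.pred) : Set S.V).PairwiseDisjoint
              (fun u => (S.succ_finite u).toFinset) := by
            intro u1 _ u2 _ hne
            refine Finset.disjoint_left.mpr fun {v} hv1 hv2 => hne ?_
            rw [← (S.succ_finite u1).mem_toFinset.mp hv1,
              ← (S.succ_finite u2).mem_toFinset.mp hv2]
          rw [Finset.sum_subset hsub hvan2, Finset.sum_biUnion hdisj]
          refine Finset.sum_eq_zero fun u hu => ?_
          obtain ⟨v0, hv0, rfl⟩ := Finset.mem_image.mp hu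
          have hstep2 : ∀ v ∈ (S.succ_finite (S.pred v0)).toFinset,
              g v * (starRingEnd ℂ) (g (S.pred^[m - n] v)) * (S.wR v : ℂ)
                = (starRingEnd ℂ) (eps v) * (f (S.pred v0) *
                    (starRingEnd ℂ) (g (S.pred^[m - n - 1] (S.pred v0))) *
                    ((S.wR (S.pred v0) / q : ℝ) : ℂ)) := by
            intro v hv
            have hpv : S.pred v = S.pred v0 := (S.succ_finite _).mem_toFinset.mp hv
            have hmv : S.pred^[m - n] v = S.pred^[m - n - 1] (S.pred v0) := by
              obtain ⟨k, hk⟩ : ∃ k, m - n = k + 1 := ⟨m - n - 1, by omega⟩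
              rw [hk, Function.iterate_succ_apply, hpv]
              congr 1
            rw [hmv, hgx v, hwRv v, hpv]
            ring
          rw [Finset.sum_congr rfl hstep2, ← Finset.sum_mul, ← map_sum,
            hepsS (S.pred v0), map_zero, zero_mul]
        have hdiag : ∀ n, n ∈ N j →
            (∑ v ∈ Sj.image (S.pred^[n]),
              g v * (starRingEnd ℂ) (g (S.pred^[n - n] v)) * (S.wR v : ℂ))
              = ∑ a ∈ A.filter (fun a => S.level a = j + n),
                  g a * (starRingEnd ℂ) (g a) * (S.wR a : ℂ) := by
          intro n hn
          have hbody : ∀ v ∈ Sj.image (S.pred^[n]),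
              g v * (starRingEnd ℂ) (g (S.pred^[n - n] v)) * (S.wR v : ℂ)
                = g v * (starRingEnd ℂ) (g v) * (S.wR v : ℂ) := by
            intro v _
            rw [Nat.sub_self]
            rfl
          rw [Finset.sum_congr rfl hbody]
          refine (Finset.sum_subset ?_ ?_).symm
          · intro a ha
            obtain ⟨haA, hal⟩ := Finset.mem_filter.mp ha
            exact htA n hn a haA hal
          · intro v hv hnv
            rcases eq_or_ne (g v) 0 with h0' | h0'
            · rw [h0', zero_mul, zero_mul]
            · exact absurd (Finset.mem_filter.mpr ⟨hgA _ h0', hlevt n v hv⟩) hnv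
        have hQC : (∑ x ∈ Sj, P x * (starRingEnd ℂ) (P x) * (S.wR x : ℂ))
            = ∑ n ∈ N j, (F n * (starRingEnd ℂ) (F n)) *
                (∑ a ∈ A.filter (fun a => S.level a = j + n),
                  g a * (starRingEnd ℂ) (g a) * (S.wR a : ℂ)) := by
          have e1 : (∑ x ∈ Sj, P x * (starRingEnd ℂ) (P x) * (S.wR x : ℂ))
              = ∑ x ∈ Sj, ∑ n ∈ N j, ∑ m ∈ N j,
                  (F n * (starRingEnd ℂ) (F m)) *
                    (g (S.pred^[n] x) * (starRingEnd ℂ) (g (S.pred^[m] x)) * (S.wR x : ℂ)) := by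
            refine Finset.sum_congr rfl fun x hx => ?_
            rw [hPx x (hSjlev x hx), map_sum]
            simp only [map_mul]
            rw [Finset.sum_mul_sum, Finset.sum_mul]
            refine Finset.sum_congr rfl fun n _ => ?_
            rw [Finset.sum_mul]
            exact Finset.sum_congr rfl fun m _ => by ring
          rw [e1, Finset.sum_comm]
          refine Finset.sum_congr rfl fun n hn => ?_
          rw [Finset.sum_comm]
          have hoff : ∀ m ∈ N j, m ≠ n →
              (∑ x ∈ Sj, (F n * (starRingEnd ℂ) (F m)) *
                (g (S.pred^[n] x) * (starRingEnd ℂ) (g (S.pred^[m] x)) * (S.wR x : ℂ))) = 0 := by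
            intro m hm hmn
            rw [← Finset.mul_sum]
            rcases lt_or_gt_of_ne hmn with hlt | hgt
            · have hc : (∑ x ∈ Sj,
                  g (S.pred^[n] x) * (starRingEnd ℂ) (g (S.pred^[m] x)) * (S.wR x : ℂ))
                  = (starRingEnd ℂ) (∑ x ∈ Sj,
                      g (S.pred^[m] x) * (starRingEnd ℂ) (g (S.pred^[n] x)) * (S.wR x : ℂ)) := by
                rw [map_sum]
                refine Finset.sum_congr rfl fun x _ => ?_
                simp only [map_mul, Complex.conj_conj, Complex.conj_ofReal]
                ring
              rw [hc, hI m n (le_of_lt hlt), hzero m hm n hlt, map_zero, mul_zero]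
            · rw [hI n m (le_of_lt hgt), hzero n hn m hgt, mul_zero]
          rw [Finset.sum_eq_single_of_mem n hn hoff, ← Finset.mul_sum, hI n n le_rfl,
            hdiag n hn]
        have hWlRconv : ∀ i : ℤ,
            ENNReal.ofReal (∑ a ∈ A.filter (fun a => S.level a = i), ‖g a‖ ^ 2 * S.wR a)
              = Wl i := by
          intro i
          rw [ENNReal.ofReal_sum_of_nonneg
            (fun a _ => mul_nonneg (sq_nonneg _) (S.auxP15_wR_nonneg a))]
          simp only [hWldef]
          exact Finset.sum_congr rfl fun a _ => hconv (g a) a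
        have hreal : (∑ x ∈ Sj, ‖P x‖ ^ 2 * S.wR x)
            = ∑ n ∈ N j, ‖F n‖ ^ 2 *
                (∑ a ∈ A.filter (fun a => S.level a = j + n), ‖g a‖ ^ 2 * S.wR a) := by
          have hinner : ∀ i : ℤ, (∑ a ∈ A.filter (fun a => S.level a = i),
              g a * (starRingEnd ℂ) (g a) * (S.wR a : ℂ))
                = ((∑ a ∈ A.filter (fun a => S.level a = i), ‖g a‖ ^ 2 * S.wR a : ℝ) : ℂ) := by
            intro i
            rw [Complex.ofReal_sum]
            refine Finset.sum_congr rfl fun a _ => ?_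
            rw [Complex.mul_conj']
            push_cast
            ring
          have hcast1 : ((∑ x ∈ Sj, ‖P x‖ ^ 2 * S.wR x : ℝ) : ℂ)
              = ∑ x ∈ Sj, P x * (starRingEnd ℂ) (P x) * (S.wR x : ℂ) := by
            rw [Complex.ofReal_sum]
            refine Finset.sum_congr rfl fun x _ => ?_
            rw [Complex.mul_conj']
            push_cast
            ring
          have hcast2 : ((∑ n ∈ N j, ‖F n‖ ^ 2 *
              (∑ a ∈ A.filter (fun a => S.level a = j + n), ‖g a‖ ^ 2 * S.wR a) : ℝ) : ℂ)
              = ∑ n ∈ N j, (F n * (starRingEnd ℂ) (F n)) *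
                  (∑ a ∈ A.filter (fun a => S.level a = j + n),
                    g a * (starRingEnd ℂ) (g a) * (S.wR a : ℂ)) := by
            rw [Complex.ofReal_sum]
            refine Finset.sum_congr rfl fun n _ => ?_
            rw [Complex.mul_conj', hinner (j + n)]
            push_cast
            ring
          exact Complex.ofReal_injective (hcast1.trans (hQC.trans hcast2.symm))
        have hterm0 : ∀ x, S.level x = j → x ∉ Sj →
            (‖P x‖₊ : ℝ≥0∞) ^ (2:ℝ) * S.w x = 0 := by
          intro x hx hns
          rw [hvanP x hx hns, nnnorm_zero, ENNReal.coe_zero,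
            ENNReal.zero_rpow_of_pos (by norm_num : (0:ℝ) < 2), zero_mul]
        calc (∑' x : {x : S.V | S.level x = j}, (‖P x.1‖₊ : ℝ≥0∞) ^ (2:ℝ) * S.w x.1)
            = ∑' x : S.V, Set.indicator {x : S.V | S.level x = j}
                (fun x => (‖P x‖₊ : ℝ≥0∞) ^ (2:ℝ) * S.w x) x :=
              tsum_subtype {x : S.V | S.level x = j}
                (fun x => (‖P x‖₊ : ℝ≥0∞) ^ (2:ℝ) * S.w x)
          _ = ∑ x ∈ Sj, Set.indicator {x : S.V | S.level x = j}
                (fun x => (‖P x‖₊ : ℝ≥0∞) ^ (2:ℝ) * S.w x) x := by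
              refine tsum_eq_sum ?_
              intro x hx
              by_cases hlx : S.level x = j
              · rw [Set.indicator_of_mem (show x ∈ {x : S.V | S.level x = j} from hlx)]
                exact hterm0 x hlx hx
              · exact Set.indicator_of_notMem
                  (show x ∉ {x : S.V | S.level x = j} from hlx) _
          _ = ∑ x ∈ Sj, (‖P x‖₊ : ℝ≥0∞) ^ (2:ℝ) * S.w x := by
              refine Finset.sum_congr rfl fun x hx => ?_
              exact Set.indicator_of_mem (show x ∈ {x : S.V | S.level x = j} from hSjlev x hx) _
          _ = ∑ x ∈ Sj, ENNReal.ofReal (‖P x‖ ^ 2 * S.wR x) :=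
              Finset.sum_congr rfl fun x _ => (hconv (P x) x).symm
          _ = ENNReal.ofReal (∑ x ∈ Sj, ‖P x‖ ^ 2 * S.wR x) :=
              (ENNReal.ofReal_sum_of_nonneg
                (fun x _ => mul_nonneg (sq_nonneg _) (S.auxP15_wR_nonneg x))).symm
          _ = ENNReal.ofReal (∑ n ∈ N j, ‖F n‖ ^ 2 *
                (∑ a ∈ A.filter (fun a => S.level a = j + n), ‖g a‖ ^ 2 * S.wR a)) := by
              rw [hreal]
          _ = ∑ n ∈ N j, (‖F n‖₊ : ℝ≥0∞) ^ (2:ℝ) * Wl (j + n) := by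
              rw [ENNReal.ofReal_sum_of_nonneg (fun n _ => mul_nonneg (sq_nonneg _)
                (Finset.sum_nonneg fun a _ => mul_nonneg (sq_nonneg _) (S.auxP15_wR_nonneg a)))]
              refine Finset.sum_congr rfl fun n _ => ?_
              rw [ENNReal.ofReal_mul (sq_nonneg _), hconv0 (F n), hWlRconv (j + n)]
          _ = ∑' n : ℕ, (‖F n‖₊ : ℝ≥0∞) ^ (2:ℝ) * Wl (j + n) := by
              refine (tsum_eq_sum ?_).symm
              intro n hn
              rw [hWl0 j n hn, mul_zero]
      calc ∑' x, (‖P x‖₊ : ℝ≥0∞) ^ (2:ℝ) * S.w x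
          = ∑' j : ℤ, ∑' x : {x : S.V | S.level x = j},
              (‖P x.1‖₊ : ℝ≥0∞) ^ (2:ℝ) * S.w x.1 :=
            auxP15_tsum_fiber S.level (fun x => (‖P x‖₊ : ℝ≥0∞) ^ (2:ℝ) * S.w x)
        _ = ∑' j : ℤ, ∑' n : ℕ, (‖F n‖₊ : ℝ≥0∞) ^ (2:ℝ) * Wl (j + n) := tsum_congr hstep
        _ = ∑' n : ℕ, ∑' j : ℤ, (‖F n‖₊ : ℝ≥0∞) ^ (2:ℝ) * Wl (j + n) := ENNReal.tsum_comm
        _ = ∑' n : ℕ, (‖F n‖₊ : ℝ≥0∞) ^ (2:ℝ) * ∑' j : ℤ, Wl (j + n) :=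
            tsum_congr fun n => ENNReal.tsum_mul_left
        _ = ∑' n : ℕ, (‖F n‖₊ : ℝ≥0∞) ^ (2:ℝ) * ∑' i : ℤ, Wl i := by
            refine tsum_congr fun n => ?_
            congr 1
            exact (Equiv.addRight (n:ℤ)).tsum_eq Wl
        _ = (∑' n : ℕ, (‖F n‖₊ : ℝ≥0∞) ^ (2:ℝ)) * ∑' i : ℤ, Wl i := ENNReal.tsum_mul_right
        _ = C * ∑' z, (‖g z‖₊ : ℝ≥0∞) ^ (2:ℝ) * S.w z := by rw [hWtot, ← hCdef]
  have h2t : (2:ℝ≥0∞).toReal = 2 := by simp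
  have hlp : ∀ h : S.V → ℂ,
      S.lpNorm 2 h = (∑' x, (‖h x‖₊ : ℝ≥0∞) ^ (2:ℝ) * S.w x) ^ (1/(2:ℝ)) := by
    intro h
    rw [FlowTree.lpNorm, if_neg (by norm_num : (2:ℝ≥0∞) ≠ ⊤), h2t]
  have eq1 : S.lpNorm 2 P = C ^ (1/(2:ℝ)) * S.lpNorm 2 g := by
    rw [hlp P, hlp g, key, ENNReal.mul_rpow_of_nonneg _ _ (by norm_num : (0:ℝ) ≤ 1/2)]
  have hEf : S.lpNorm 2 g ≤ S.epsSup eps * S.lpNorm 2 f := by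
    rw [hlp g, hlp f]
    have hptw : ∀ z, (‖g z‖₊ : ℝ≥0∞) ^ (2:ℝ) * S.w z
        ≤ (S.epsSup eps) ^ (2:ℝ) * ((‖f (S.pred z)‖₊ : ℝ≥0∞) ^ (2:ℝ) * S.w z) := by
      intro z
      rw [← mul_assoc]
      refine mul_le_mul_left ?_ (S.w z)
      rw [← ENNReal.mul_rpow_of_nonneg _ _ (by norm_num : (0:ℝ) ≤ 2)]
      refine ENNReal.rpow_le_rpow ?_ (by norm_num)
      have hnn : (‖g z‖₊ : ℝ≥0∞) = (‖eps z‖₊ : ℝ≥0∞) * (‖f (S.pred z)‖₊ : ℝ≥0∞) := by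
        rw [show g z = (starRingEnd ℂ) (eps z) * f (S.pred z) from rfl, nnnorm_mul,
          RCLike.nnnorm_conj]
        push_cast
        ring
      rw [hnn]
      exact mul_le_mul_left (le_iSup (fun x => (‖eps x‖₊ : ℝ≥0∞)) z) _
    have hpull : ∑' z, (‖f (S.pred z)‖₊ : ℝ≥0∞) ^ (2:ℝ) * S.w z
        = ∑' z, (‖f z‖₊ : ℝ≥0∞) ^ (2:ℝ) * S.w z :=
      S.auxP15_pullback hq (fun z => (‖f z‖₊ : ℝ≥0∞) ^ (2:ℝ))
    calc (∑' z, (‖g z‖₊ : ℝ≥0∞) ^ (2:ℝ) * S.w z) ^ (1/(2:ℝ))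
        ≤ (∑' z, (S.epsSup eps) ^ (2:ℝ) * ((‖f (S.pred z)‖₊ : ℝ≥0∞) ^ (2:ℝ) * S.w z)) ^ (1/(2:ℝ)) :=
          ENNReal.rpow_le_rpow (ENNReal.tsum_le_tsum hptw) (by norm_num)
      _ = ((S.epsSup eps) ^ (2:ℝ) * ∑' z, (‖f z‖₊ : ℝ≥0∞) ^ (2:ℝ) * S.w z) ^ (1/(2:ℝ)) := by
          rw [ENNReal.tsum_mul_left, hpull]
      _ = S.epsSup eps * (∑' z, (‖f z‖₊ : ℝ≥0∞) ^ (2:ℝ) * S.w z) ^ (1/(2:ℝ)) := by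
          rw [ENNReal.mul_rpow_of_nonneg _ _ (by norm_num : (0:ℝ) ≤ 1/2), ← ENNReal.rpow_mul]
          norm_num
  refine ⟨eq1, ?_⟩
  calc S.lpNorm 2 P = C ^ (1/(2:ℝ)) * S.lpNorm 2 g := eq1
    _ ≤ C ^ (1/(2:ℝ)) * (S.epsSup eps * S.lpNorm 2 f) := mul_le_mul_right hEf _
    _ = C ^ (1/(2:ℝ)) * S.epsSup eps * S.lpNorm 2 f := (mul_assoc _ _ _).symm
end

section
/- Let G : ℕ → ℂ and let 𝒦 be the integral operator 𝒦g(x) = Σ_{y∈T} q^{−ℓ(x)/2} G(d(x,y)) q^{−ℓ(y)/2} g(y) μ(y), defined for finitely supported g. Then for every finitely supported f : T → ℂ and every x ∈ T, 𝒦(∇_ε* f)(x) = Σ_{n≥0} q^{n/2} (G(n) − G(n+2)) · ∇_ε* f(𝔭ⁿ(x)) (all sums involved have finitely many nonzero terms). -/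
open MeasureTheory ENNReal Set Function
open scoped NNReal ENNReal Classical

section Aux
open FlowTree

variable {q : ℕ} (S : FlowTree q)

lemma aux_level_pred_iter (x : S.V) (n : ℕ) :
    S.level (S.pred^[n] x) = S.level x + n := by
  induction n with
  | zero => simp
  | succ n ih =>
    rw [Function.iterate_succ_apply', S.level_pred, ih]
    push_cast; ring

lemma aux_meet_level {x y : S.V} {a b : ℕ} (h : S.pred^[a] x = S.pred^[b] y) :
    S.level x + a = S.level y + b := by
  have := congrArg S.level h
  rwa [aux_level_pred_iter, aux_level_pred_iter] at this

lemma aux_dist_pred_iter (x : S.V) (n : ℕ) : S.dist x (S.pred^[n] x) = n := by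
  have hle : S.dist x (S.pred^[n] x) ≤ n := by
    have := S.dist_le x (S.pred^[n] x) n 0 (by simp)
    simpa using this
  obtain ⟨a, b, hab, hd⟩ := S.dist_spec x (S.pred^[n] x)
  have hb : S.pred^[b] (S.pred^[n] x) = S.pred^[b + n] x := by
    rw [Function.iterate_add_apply]
  rw [hb] at hab
  have hl : S.level x + (a : ℤ) = S.level x + ((b + n : ℕ) : ℤ) := aux_meet_level S hab
  omega

lemma aux_dist_succ_anc (x : S.V) (n : ℕ) (y : S.V)
    (hy : S.pred y = S.pred^[n + 1] x) (hne : y ≠ S.pred^[n] x) :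
    S.dist x y = n + 2 := by
  have hle : S.dist x y ≤ n + 2 := by
    have h1 : S.pred^[n + 1] x = S.pred^[1] y := by
      simpa using hy.symm
    have := S.dist_le x y (n + 1) 1 h1
    omega
  obtain ⟨a, b, hab, hd⟩ := S.dist_spec x y
  have hly : S.level y = S.level x + n := by
    have h2 := S.level_pred y
    rw [hy, aux_level_pred_iter] at h2
    omega
  have hl := aux_meet_level S hab
  rw [hly] at hl
  have hban : a = b + n := by omega
  rcases Nat.eq_zero_or_pos b with hb0 | hbpos
  · exfalso
    apply hne
    subst hb0
    simp only [Function.iterate_zero, id_eq] at hab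
    have ha : a = n := by omega
    rw [← hab, ha]
  · omega

lemma aux_dist_succ_nonanc (x z : S.V) (hanc : ∀ n : ℕ, 1 ≤ n → S.pred^[n] x ≠ z)
    (y : S.V) (hy : S.pred y = z) : S.dist x y = S.dist x z + 1 := by
  obtain ⟨k, m, hkm, hdkm⟩ := S.dist_spec x z
  have hly : S.level y = S.level z - 1 := by
    have h2 := S.level_pred y
    rw [hy] at h2; omega
  rcases Nat.eq_zero_or_pos m with hm0 | hmpos
  · -- pred^[k] x = z forces k = 0, z = x
    subst hm0
    simp only [Function.iterate_zero, id_eq] at hkm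
    have hk0 : k = 0 := by
      by_contra hk
      exact hanc k (by omega) hkm
    subst hk0
    simp only [Function.iterate_zero, id_eq] at hkm
    have hd0 : S.dist x z = 0 := by omega
    rw [hd0]
    -- dist x y = 1 since pred y = z = x
    have hle : S.dist x y ≤ 1 := by
      have h1 : S.pred^[0] x = S.pred^[1] y := by simp [hy, hkm]
      have := S.dist_le x y 0 1 h1
      omega
    have hne : S.dist x y ≠ 0 := by
      intro h0
      have h1 := S.eq_of_dist_eq_zero x y h0
      have h2 := congrArg S.level hkm
      rw [← h1] at hly
      omega
    omega
  · -- m ≥ 1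
    have hle : S.dist x y ≤ S.dist x z + 1 := by
      have h1 : S.pred^[k] x = S.pred^[m + 1] y := by
        rw [Function.iterate_succ_apply, hy, hkm]
      have := S.dist_le x y k (m + 1) h1
      omega
    obtain ⟨a, b, hab, hdab⟩ := S.dist_spec x y
    have hl := aux_meet_level S hab
    have hl2 := aux_meet_level S hkm
    rcases Nat.eq_zero_or_pos b with hb0 | hbpos
    · exfalso
      subst hb0
      simp only [Function.iterate_zero, id_eq] at hab
      have h1 : S.pred^[a + 1] x = z := by
        rw [Function.iterate_succ_apply', hab, hy]
      exact hanc (a + 1) (by omega) h1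
    · obtain ⟨b', rfl⟩ : ∃ b', b = b' + 1 := ⟨b - 1, by omega⟩
      have h1 : S.pred^[a] x = S.pred^[b'] z := by
        rw [hab, Function.iterate_succ_apply, hy]
      have := S.dist_le x z a b' h1
      omega

lemma aux_conj_sum_zero (eps : S.V → ℂ) (z : S.V)
    [Fintype {y // S.pred y = z}]
    (hz : ∑' y : {y // S.pred y = z}, eps y.1 = 0) :
    ∑ y : {y // S.pred y = z}, (starRingEnd ℂ) (eps y.1) = 0 := by
  rw [← map_sum, tsum_fintype] at *
  rw [hz]
  simp

end Aux

/-- for the integral operator `𝒦` with kernel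
`q^{−ℓ(x)/2} G(d(x,y)) q^{−ℓ(y)/2}`,
`𝒦(∇_ε* f)(x) = Σ_{n≥0} q^{n/2}(G(n) − G(n+2)) ∇_ε* f(𝔭ⁿ(x))`. -/
theorem kernelOp_hgradStar_formula {q : ℕ} (hq : 2 ≤ q) (S : FlowTree q)
    (eps : S.V → ℂ) (hb : ∃ M : ℝ, ∀ x, ‖eps x‖ ≤ M)
    (hz : ∀ x : S.V, ∑' y : {y | S.pred y = x}, eps y.1 = 0)
    (G : ℕ → ℂ) (f : S.V → ℂ) (hf : (Function.support f).Finite) (x : S.V) :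
    S.kernelOp G (S.hgradStar eps f) x
      = ∑' n : ℕ, (((q : ℝ) ^ ((n : ℝ)/2) : ℝ) : ℂ) * (G n - G (n + 2)) *
          S.hgradStar eps f (S.pred^[n] x) := by
  classical
  have hq0 : (0 : ℝ) < (q : ℝ) := by
    have : 0 < q := by omega
    exact_mod_cast this
  set g : S.V → ℂ := S.hgradStar eps f with hgdef
  set h : S.V → ℂ := fun y =>
    (((q : ℝ) ^ (-((S.level x : ℤ) : ℝ)/2) * (q : ℝ) ^ (-((S.level y : ℤ) : ℝ)/2) : ℝ) : ℂ)
      * G (S.dist x y) * g y * (S.wR y : ℂ) with hhdef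
  have hK : S.kernelOp G g x = ∑' y, h y := rfl
  -- finite support and summability
  have hsupp : Function.support h ⊆ S.pred ⁻¹' (Function.support f) := by
    intro y hy
    simp only [Function.mem_support, hhdef] at hy
    simp only [Set.mem_preimage, Function.mem_support]
    intro hc
    apply hy
    have hgy : g y = 0 := by simp [hgdef, FlowTree.hgradStar, hc]
    rw [hgy]
    ring
  have hfin1 : (S.pred ⁻¹' (Function.support f)).Finite := by
    have he : S.pred ⁻¹' (Function.support f)
        = ⋃ z ∈ Function.support f, {y | S.pred y = z} := by
      ext y
      simp only [Set.mem_preimage, Function.mem_support, Set.mem_iUnion, Set.mem_setOf_eq]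
      constructor
      · intro hy; exact ⟨S.pred y, hy, rfl⟩
      · rintro ⟨z, hz1, rfl⟩; exact hz1
    rw [he]
    exact Set.Finite.biUnion hf (fun z _ => S.succ_finite z)
  have hfin : (Function.support h).Finite := hfin1.subset hsupp
  have hsum : Summable h := by
    apply summable_of_ne_finset_zero (s := hfin.toFinset)
    intro b hb
    by_contra hb'
    exact hb (hfin.mem_toFinset.mpr hb')
  -- decompose the sum over fibers of pred
  set T : S.V → ℂ := fun z => ∑' y : {y // S.pred y = z}, h y.1 with hTdef
  have hKey : (∑' y, h y) = ∑' z : S.V, T z := by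
    rw [← (Equiv.sigmaFiberEquiv S.pred).tsum_eq h]
    exact Summable.tsum_sigma ((Equiv.sigmaFiberEquiv S.pred).summable_iff.mpr hsum)
  set j : ℕ → S.V := fun n => S.pred^[n + 1] x with hjdef
  have hjinj : Function.Injective j := by
    intro a b hab
    have h1 := congrArg S.level hab
    rw [aux_level_pred_iter, aux_level_pred_iter] at h1
    omega
  -- vanishing outside the range of j
  have hT0 : ∀ z ∉ Set.range j, T z = 0 := by
    intro z hzr
    have hanc : ∀ n : ℕ, 1 ≤ n → S.pred^[n] x ≠ z := by
      intro n hn hc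
      apply hzr
      refine ⟨n - 1, ?_⟩
      show S.pred^[n - 1 + 1] x = z
      rw [Nat.sub_add_cancel hn]
      exact hc
    haveI : Finite {y // S.pred y = z} := (S.succ_finite z).to_subtype
    haveI : Fintype {y // S.pred y = z} := Fintype.ofFinite _
    have hterm : ∀ y : {y // S.pred y = z},
        h y.1 = ((((q : ℝ) ^ (-((S.level x : ℤ) : ℝ)/2)
            * (q : ℝ) ^ (-(((S.level z - 1 : ℤ)) : ℝ)/2) : ℝ) : ℂ)
          * G (S.dist x z + 1) * f z * (((q : ℝ) ^ ((S.level z - 1 : ℤ)) : ℝ) : ℂ))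
          * (starRingEnd ℂ) (eps y.1) := by
      intro y
      have hly : S.level y.1 = S.level z - 1 := by
        have h2 := S.level_pred y.1
        rw [y.2] at h2
        omega
      have hd := aux_dist_succ_nonanc S x z hanc y.1 y.2
      simp only [hhdef, hgdef, FlowTree.hgradStar, FlowTree.wR, hly, hd, y.2]
      ring
    show (∑' y : {y // S.pred y = z}, h y.1) = 0
    rw [tsum_fintype, Finset.sum_congr rfl (fun y _ => hterm y), ← Finset.mul_sum,
      aux_conj_sum_zero S eps z (hz z), mul_zero]
  -- value on the range of j
  have hTj : ∀ n : ℕ, T (j n)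
      = (((q : ℝ) ^ ((n : ℝ)/2) : ℝ) : ℂ) * (G n - G (n + 2)) * g (S.pred^[n] x) := by
    intro n
    have hzdef : j n = S.pred^[n + 1] x := rfl
    set z : S.V := S.pred^[n + 1] x with hz'
    haveI : Finite {y // S.pred y = z} := (S.succ_finite z).to_subtype
    haveI : Fintype {y // S.pred y = z} := Fintype.ofFinite _
    have hy0 : S.pred (S.pred^[n] x) = z := by
      rw [hz']
      exact (Function.iterate_succ_apply' S.pred n x).symm
    set y₀ : {y // S.pred y = z} := ⟨S.pred^[n] x, hy0⟩ with hy₀def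
    have hlz : S.level z = S.level x + (n + 1 : ℕ) := by
      rw [hz']; exact aux_level_pred_iter S x (n + 1)
    -- the constants
    set A : ℝ := (q : ℝ) ^ (-((S.level x : ℤ) : ℝ)/2) with hA
    set B : ℝ := (q : ℝ) ^ (-(((S.level x + (n : ℤ) : ℤ)) : ℝ)/2) with hB
    set E : ℝ := (q : ℝ) ^ ((S.level x + (n : ℤ) : ℤ)) with hE
    have hABE : A * B * E = (q : ℝ) ^ ((n : ℝ)/2) := by
      rw [hA, hB, hE, ← Real.rpow_intCast (q : ℝ) (S.level x + (n : ℤ)),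
        ← Real.rpow_add hq0, ← Real.rpow_add hq0]
      congr 1
      push_cast
      ring
    have hABE' : ((A : ℝ) : ℂ) * ((B : ℝ) : ℂ) * ((E : ℝ) : ℂ)
        = (((q : ℝ) ^ ((n : ℝ)/2) : ℝ) : ℂ) := by
      rw [← Complex.ofReal_mul, ← Complex.ofReal_mul, hABE]
    have hterm : ∀ y : {y // S.pred y = z},
        h y.1 = (((A * B : ℝ) : ℂ) * G (n + 2) * f z * ((E : ℝ) : ℂ))
            * (starRingEnd ℂ) (eps y.1)
          + (if y = y₀ then
              (((A * B : ℝ) : ℂ) * (G n - G (n + 2)) * f z * ((E : ℝ) : ℂ))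
                * (starRingEnd ℂ) (eps y.1) else 0) := by
      intro y
      have hly : S.level y.1 = S.level x + (n : ℤ) := by
        have h2 := S.level_pred y.1
        rw [y.2] at h2
        omega
      by_cases hyy : y = y₀
      · have hd : S.dist x y.1 = n := by
          rw [hyy]
          exact aux_dist_pred_iter S x n
        simp only [hhdef, hgdef, FlowTree.hgradStar, FlowTree.wR, hly, hd, y.2, if_pos hyy,
          hA, hB, hE]
        push_cast
        ring
      · have hne : y.1 ≠ S.pred^[n] x := fun hc => hyy (Subtype.ext hc)
        have hd : S.dist x y.1 = n + 2 := aux_dist_succ_anc S x n y.1 y.2 hne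
        simp only [hhdef, hgdef, FlowTree.hgradStar, FlowTree.wR, hly, hd, y.2, if_neg hyy,
          hA, hB, hE]
        push_cast
        ring
    have hsum1 : (∑ y : {y // S.pred y = z},
        (((A * B : ℝ) : ℂ) * G (n + 2) * f z * ((E : ℝ) : ℂ))
          * (starRingEnd ℂ) (eps y.1)) = 0 := by
      rw [← Finset.mul_sum, aux_conj_sum_zero S eps z (hz z), mul_zero]
    have hsum2 : (∑ y : {y // S.pred y = z},
        (if y = y₀ then
          (((A * B : ℝ) : ℂ) * (G n - G (n + 2)) * f z * ((E : ℝ) : ℂ))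
            * (starRingEnd ℂ) (eps y.1) else 0))
        = (((A * B : ℝ) : ℂ) * (G n - G (n + 2)) * f z * ((E : ℝ) : ℂ))
            * (starRingEnd ℂ) (eps y₀.1) := by
      rw [Finset.sum_ite_eq' Finset.univ y₀
        (fun y => (((A * B : ℝ) : ℂ) * (G n - G (n + 2)) * f z * ((E : ℝ) : ℂ))
          * (starRingEnd ℂ) (eps y.1))]
      simp
    have hTz : T (j n) = ∑ y : {y // S.pred y = z}, h y.1 := by
      show (∑' y : {y // S.pred y = z}, h y.1) = _
      exact tsum_fintype _
    rw [hTz, Finset.sum_congr rfl (fun y _ => hterm y), Finset.sum_add_distrib, hsum1,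
      hsum2, zero_add]
    have hgval : g (S.pred^[n] x) = (starRingEnd ℂ) (eps (S.pred^[n] x)) * f z := by
      rw [hgdef]
      show (starRingEnd ℂ) (eps (S.pred^[n] x)) * f (S.pred (S.pred^[n] x)) = _
      rw [hy0]
    rw [hgval]
    have : y₀.1 = S.pred^[n] x := rfl
    rw [this, Complex.ofReal_mul]
    linear_combination (G n - G (n + 2)) * f z * (starRingEnd ℂ) (eps (S.pred^[n] x)) * hABE'
  calc S.kernelOp G g x = ∑' z : S.V, T z := by rw [hK, hKey]
    _ = ∑' n : ℕ, T (j n) := by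
        refine (Function.Injective.tsum_eq hjinj ?_).symm
        intro z hzsupp
        by_contra hzr
        exact hzsupp (hT0 z hzr)
    _ = _ := tsum_congr hTj
end
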